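/- arXiv:math/0104016 — 7 statements merged into one kernel-verified Lean document; each statement's English description precedes it below -/
import Mathlib

section
/- Let C be a k-dimensional binary linear code of length n and θ any real number. Then (1/2^k) · Σ_{a ∈ C^⊥} ( Σ_{c ∈ C} (sin θ)^{n − wt(c+a)} (cos θ)^{wt(c+a)} )² ≤ 1, where C^⊥ is the dual code, wt is Hamming weight, and c + a is computed over GF(2). -/
open scoped Classical

/-- The dual code of a binary linear code `C ⊆ GF(2)^n`. -/
def dualCode {n : ℕ} (C : Submodule (ZMod 2) (Fin n → ZMod 2)) :
    Submodule (ZMod 2) (Fin n → ZMod 2) where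
  carrier := {a | ∀ c ∈ C, ∑ i, a i * c i = 0}
  add_mem' := by
    intro a b ha hb c hc
    simp only [Set.mem_setOf_eq] at *
    simp [add_mul, Finset.sum_add_distrib, ha c hc, hb c hc]
  zero_mem' := by simp
  smul_mem' := by
    intro r a ha c hc
    simp only [Set.mem_setOf_eq] at *
    simp [smul_eq_mul, mul_assoc, ← Finset.mul_sum, ha c hc]

/-- The finset of codewords of a binary linear code. -/
noncomputable def codewords {n : ℕ} (C : Submodule (ZMod 2) (Fin n → ZMod 2)) :
    Finset (Fin n → ZMod 2) :=
  Finset.univ.filter (fun c => c ∈ C)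

/-- `A w`: the number of codewords of Hamming weight `w`. -/
noncomputable def weightDist {n : ℕ} (C : Submodule (ZMod 2) (Fin n → ZMod 2)) (w : ℕ) : ℕ :=
  (Finset.univ.filter (fun c => c ∈ C ∧ hammingNorm c = w)).card

set_option maxHeartbeats 1000000

namespace LemmaIII2Aux

open Finset

variable {n : ℕ}

/-- The "dual" of a finset code, relative to a support set `s`. -/
noncomputable def gdual (s : Finset (Fin n)) (C : Finset (Fin n → ZMod 2)) :
    Finset (Fin n → ZMod 2) :=
  Finset.univ.filter fun a => (∀ i, i ∉ s → a i = 0) ∧ ∀ c ∈ C, ∑ i, a i * c i = 0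

lemma mem_gdual {s : Finset (Fin n)} {C : Finset (Fin n → ZMod 2)} {a : Fin n → ZMod 2} :
    a ∈ gdual s C ↔ (∀ i, i ∉ s → a i = 0) ∧ ∀ c ∈ C, ∑ i, a i * c i = 0 := by
  simp [gdual]

lemma zmod2_cases (x : ZMod 2) : x = 0 ∨ x = 1 := by revert x; decide

lemma zmod2_add_self (x : ZMod 2) : x + x = 0 := by revert x; decide

lemma zmod2_add_eq_zero {x y : ZMod 2} (h : x + y = 0) : x = y := by revert x y; decide

lemma zmod2_abcb (u v x : ZMod 2) : u + v + x + v = u + x := by revert u v x; decide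

lemma sum_split (i₀ : Fin n) (f : Fin n → ZMod 2) :
    ∑ i, f i = f i₀ + ∑ i ∈ Finset.univ.erase i₀, f i :=
  (Finset.add_sum_erase _ f (mem_univ i₀)).symm

/-- The core inequality, proved by induction on the support. -/
lemma core (s : Finset (Fin n)) :
    ∀ (w : Fin n → ZMod 2 → ℝ) (C : Finset (Fin n → ZMod 2)),
      (∀ i ∈ s, (w i 0) ^ 2 + (w i 1) ^ 2 = 1) →
      (0 : Fin n → ZMod 2) ∈ C →
      (∀ c ∈ C, ∀ c' ∈ C, c + c' ∈ C) →
      (∀ c ∈ C, ∀ i, i ∉ s → c i = 0) →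
      ∑ a ∈ gdual s C, (∑ c ∈ C, ∏ i ∈ s, w i ((c + a) i)) ^ 2 ≤ (C.card : ℝ) := by
  induction s using Finset.induction_on with
  | empty =>
    intro w C hw h0 hadd hsupp
    have hC : C = {0} := by
      apply Finset.ext
      intro c
      simp only [Finset.mem_singleton]
      constructor
      · intro hc
        funext i
        exact hsupp c hc i (by simp)
      · rintro rfl; exact h0
    have hD : gdual (∅ : Finset (Fin n)) C = {0} := by
      apply Finset.ext
      intro a
      rw [mem_gdual]
      simp only [Finset.mem_singleton]
      constructor
      · rintro ⟨h1, _⟩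
        funext i
        exact h1 i (by simp)
      · rintro rfl
        refine ⟨fun i _ => rfl, fun c _ => by simp⟩
    subst hC
    rw [hD]
    simp
  | @insert i₀ t hi₀ IH =>
    intro w C hw h0 hadd hsupp
    have hw_t : ∀ i ∈ t, (w i 0) ^ 2 + (w i 1) ^ 2 = 1 :=
      fun i hi => hw i (Finset.mem_insert_of_mem hi)
    by_cases hg : ∃ g ∈ C, g i₀ ≠ 0
    · -- Case B : some codeword is 1 at i₀
      obtain ⟨g, hgC, hgne⟩ := hg
      have hg1 : g i₀ = 1 := by
        rcases zmod2_cases (g i₀) with h | h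
        · exact absurd h hgne
        · exact h
      set g' : Fin n → ZMod 2 := Function.update g i₀ 0 with hg'def
      have hg'i₀ : g' i₀ = 0 := Function.update_self _ _ _
      have hg'eq : ∀ i, i ≠ i₀ → g' i = g i := fun i hi => Function.update_of_ne hi _ _
      set C₀ : Finset (Fin n → ZMod 2) := C.filter (fun c => c i₀ = 0) with hC₀def
      have hC₀mem : ∀ {c}, c ∈ C₀ ↔ c ∈ C ∧ c i₀ = 0 := by
        intro c; simp [hC₀def]
      have h0₀ : (0 : Fin n → ZMod 2) ∈ C₀ := hC₀mem.2 ⟨h0, rfl⟩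
      have hadd₀ : ∀ c ∈ C₀, ∀ c' ∈ C₀, c + c' ∈ C₀ := by
        intro c hc c' hc'
        rcases hC₀mem.1 hc with ⟨hc1, hc2⟩
        rcases hC₀mem.1 hc' with ⟨hc1', hc2'⟩
        refine hC₀mem.2 ⟨hadd c hc1 c' hc1', ?_⟩
        show c i₀ + c' i₀ = 0
        rw [hc2, hc2', add_zero]
      have hsupp₀ : ∀ c ∈ C₀, ∀ i, i ∉ t → c i = 0 := by
        intro c hc i hit
        rcases hC₀mem.1 hc with ⟨hc1, hc2⟩
        by_cases h : i = i₀
        · subst h; exact hc2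
        · exact hsupp c hc1 i (by simp [h, hit])
      -- the pairing with g'
      set β : (Fin n → ZMod 2) → ZMod 2 := fun a => ∑ i, a i * g' i with hβdef
      -- cardinality: |C| = 2 |C₀|
      have hcard : (C.card : ℝ) = (C₀.card : ℝ) + (C₀.card : ℝ) := by
        have h1 : C₀.card + (C.filter fun c => ¬ c i₀ = 0).card = C.card :=
          Finset.card_filter_add_card_filter_not (fun c : Fin n → ZMod 2 => c i₀ = 0)
        have h2 : (C.filter fun c => ¬ c i₀ = 0).card = C₀.card := by
          refine Finset.card_nbij' (i := fun c : Fin n → ZMod 2 => c + g) (j := fun c : Fin n → ZMod 2 => c + g) ?_ ?_ ?_ ?_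
          · intro c hc
            dsimp only
            simp only [Finset.mem_coe, Finset.mem_filter] at hc
            have h1 : c i₀ = 1 := by
              rcases zmod2_cases (c i₀) with h | h
              · exact absurd h hc.2
              · exact h
            refine hC₀mem.2 ⟨hadd c hc.1 g hgC, ?_⟩
            show c i₀ + g i₀ = 0
            rw [h1, hg1]
            decide
          · intro c hc
            dsimp only
            rcases hC₀mem.1 hc with ⟨hc1, hc2⟩
            simp only [Finset.mem_coe, Finset.mem_filter]
            refine ⟨hadd c hc1 g hgC, ?_⟩
            show ¬ (c i₀ + g i₀ = 0)
            rw [hc2, hg1]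
            decide
          · intro c _
            dsimp only
            funext i
            show c i + g i + g i = c i
            rw [add_assoc, zmod2_add_self, add_zero]
          · intro c _
            dsimp only
            funext i
            show c i + g i + g i = c i
            rw [add_assoc, zmod2_add_self, add_zero]
        rw [← h1, h2]
        push_cast
        ring
      -- inner sums
      set A : (Fin n → ZMod 2) → ℝ := fun a' => ∑ c ∈ C₀, ∏ i ∈ t, w i ((c + a') i) with hAdef
      set B : (Fin n → ZMod 2) → ℝ :=
        fun a' => ∑ c ∈ C₀, ∏ i ∈ t, w i ((c + a') i + g' i) with hBdef
      -- main bijection for the dual sum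
      have hbij : ∑ a ∈ gdual (insert i₀ t) C, (∑ c ∈ C, ∏ i ∈ insert i₀ t, w i ((c + a) i)) ^ 2
          = ∑ a' ∈ gdual t C₀,
              (w i₀ (β a') * A a' + w i₀ (1 + β a') * B a') ^ 2 := by
        refine Finset.sum_nbij' (i := fun a => Function.update a i₀ 0)
          (j := fun a' => Function.update a' i₀ (β a')) ?_ ?_ ?_ ?_ ?_
        · -- forward membership
          intro a ha
          rcases mem_gdual.1 ha with ⟨ha1, ha2⟩
          rw [mem_gdual]
          constructor
          · intro i hit
            by_cases h : i = i₀
            · subst h; exact Function.update_self _ _ _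
            · rw [Function.update_of_ne h]
              exact ha1 i (by simp [h, hit])
          · intro c hc
            rcases hC₀mem.1 hc with ⟨hc1, hc2⟩
            rw [sum_split i₀]
            have hrest : ∀ i ∈ Finset.univ.erase i₀,
                (Function.update a i₀ 0) i * c i = a i * c i := by
              intro i hi
              rw [Function.update_of_ne (Finset.ne_of_mem_erase hi)]
            rw [Finset.sum_congr rfl hrest, Function.update_self, hc2]
            have := sum_split i₀ (fun i => a i * c i)
            rw [ha2 c hc1, hc2, mul_zero, zero_add] at this
            rw [mul_zero, zero_add, ← this]
        · -- backward membership
          intro a' ha'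
          rcases mem_gdual.1 ha' with ⟨ha1, ha2⟩
          have ha'i₀ : a' i₀ = 0 := ha1 i₀ hi₀
          rw [mem_gdual]
          constructor
          · intro i hit
            have hne : i ≠ i₀ := by
              intro h; subst h; exact hit (Finset.mem_insert_self _ _)
            rw [Function.update_of_ne hne]
            exact ha1 i (fun h => hit (Finset.mem_insert_of_mem h))
          · intro c hc
            rw [sum_split i₀, Function.update_self]
            have hrest : ∀ i ∈ Finset.univ.erase i₀,
                (Function.update a' i₀ (β a')) i * c i = a' i * c i := by
              intro i hi
              rw [Function.update_of_ne (Finset.ne_of_mem_erase hi)]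
            rw [Finset.sum_congr rfl hrest]
            have herase : ∀ (x : Fin n → ZMod 2),
                ∑ i ∈ Finset.univ.erase i₀, a' i * x i = ∑ i, a' i * x i := by
              intro x
              rw [sum_split i₀ (fun i => a' i * x i), ha'i₀, zero_mul, zero_add]
            rcases zmod2_cases (c i₀) with hci | hci
            · -- c ∈ C₀
              have hcC₀ : c ∈ C₀ := hC₀mem.2 ⟨hc, hci⟩
              rw [hci, mul_zero, zero_add, herase, ha2 c hcC₀]
            · -- c i₀ = 1 : use c + g ∈ C₀
              have hcgC₀ : c + g ∈ C₀ := by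
                refine hC₀mem.2 ⟨hadd c hc g hgC, ?_⟩
                show c i₀ + g i₀ = 0
                rw [hci, hg1]
                decide
              have hsum : ∑ i, a' i * (c + g) i = 0 := ha2 _ hcgC₀
              have hsplit : ∑ i, a' i * (c + g) i
                  = (∑ i, a' i * c i) + ∑ i, a' i * g i := by
                rw [← Finset.sum_add_distrib]
                apply Finset.sum_congr rfl
                intro i _
                simp [Pi.add_apply, mul_add]
              have hg'sum : ∑ i, a' i * g i = β a' := by
                rw [hβdef]
                simp only
                rw [sum_split i₀ (fun i => a' i * g i), sum_split i₀ (fun i => a' i * g' i)]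
                rw [ha'i₀]
                simp only [zero_mul, zero_add]
                apply Finset.sum_congr rfl
                intro i hi
                rw [hg'eq i (Finset.ne_of_mem_erase hi)]
              have hac : ∑ i, a' i * c i = β a' := by
                rw [hsplit, hg'sum] at hsum
                exact zmod2_add_eq_zero hsum
              rw [hci, mul_one, herase, hac]
              exact zmod2_add_self _
        · -- left inverse
          intro a ha
          rcases mem_gdual.1 ha with ⟨ha1, ha2⟩
          have hβ : β (Function.update a i₀ 0) = a i₀ := by
            have hgmem : 0 = ∑ i, a i * g i := (ha2 g hgC).symm
            rw [sum_split i₀ (fun i => a i * g i), hg1, mul_one] at hgmem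
            have hthis : β (Function.update a i₀ 0)
                = ∑ i ∈ Finset.univ.erase i₀, a i * g i := by
              rw [hβdef]
              simp only
              rw [sum_split i₀, Function.update_self, hg'i₀, mul_zero, zero_add]
              apply Finset.sum_congr rfl
              intro i hi
              rw [Function.update_of_ne (Finset.ne_of_mem_erase hi),
                hg'eq i (Finset.ne_of_mem_erase hi)]
            rw [hthis]
            exact (zmod2_add_eq_zero hgmem.symm).symm
          rw [hβ, Function.update_idem, Function.update_eq_self]
        · -- right inverse
          intro a' ha'
          rcases mem_gdual.1 ha' with ⟨ha1, _⟩
          have ha'i₀ : a' i₀ = 0 := ha1 i₀ hi₀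
          rw [Function.update_idem]
          conv_lhs => rw [← ha'i₀]
          exact Function.update_eq_self _ _
        · -- summand equality
          intro a ha
          rcases mem_gdual.1 ha with ⟨ha1, ha2⟩
          congr 1
          -- rewrite inner sum
          set a' : Fin n → ZMod 2 := Function.update a i₀ 0 with ha'def
          have ha'eq : ∀ i, i ≠ i₀ → a' i = a i :=
            fun i hi => Function.update_of_ne hi _ _
          have hβ : β a' = a i₀ := by
            have hgmem : 0 = ∑ i, a i * g i := (ha2 g hgC).symm
            rw [sum_split i₀ (fun i => a i * g i), hg1, mul_one] at hgmem
            have hthis : β a' = ∑ i ∈ Finset.univ.erase i₀, a i * g i := by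
              rw [hβdef]
              simp only
              rw [sum_split i₀, ha'def, Function.update_self, hg'i₀, mul_zero, zero_add]
              apply Finset.sum_congr rfl
              intro i hi
              rw [Function.update_of_ne (Finset.ne_of_mem_erase hi),
                hg'eq i (Finset.ne_of_mem_erase hi)]
            rw [hthis]
            exact (zmod2_add_eq_zero hgmem.symm).symm
          rw [hβ]
          -- split the sum over C
          rw [← Finset.sum_filter_add_sum_filter_not C (fun c => c i₀ = 0)]
          have hpart1 : ∑ c ∈ C.filter (fun c => c i₀ = 0), ∏ i ∈ insert i₀ t, w i ((c + a) i)
              = w i₀ (a i₀) * A a' := by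
            rw [hAdef]
            simp only
            rw [Finset.mul_sum]
            apply Finset.sum_congr rfl
            intro c hc
            rcases hC₀mem.1 hc with ⟨_, hc2⟩
            rw [Finset.prod_insert hi₀]
            congr 1
            · have harg : (c + a) i₀ = a i₀ := by
                simp only [Pi.add_apply]
                rw [hc2, zero_add]
              rw [harg]
            · apply Finset.prod_congr rfl
              intro i hi
              have hne : i ≠ i₀ := fun h => hi₀ (h ▸ hi)
              have harg : (c + a') i = (c + a) i := by
                simp only [Pi.add_apply]
                rw [ha'eq i hne]
              rw [harg]
          have hpart2 : ∑ c ∈ C.filter (fun c => ¬ c i₀ = 0),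
                ∏ i ∈ insert i₀ t, w i ((c + a) i)
              = w i₀ (1 + a i₀) * B a' := by
            rw [hBdef]
            simp only
            rw [Finset.mul_sum]
            refine Finset.sum_nbij' (i := fun c => c + g) (j := fun c => c + g) ?_ ?_ ?_ ?_ ?_
            · intro c hc
              simp only [Finset.mem_coe, Finset.mem_filter] at hc
              have h1 : c i₀ = 1 := by
                rcases zmod2_cases (c i₀) with h | h
                · exact absurd h hc.2
                · exact h
              refine hC₀mem.2 ⟨hadd c hc.1 g hgC, ?_⟩
              show c i₀ + g i₀ = 0
              rw [h1, hg1]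
              decide
            · intro c hc
              rcases hC₀mem.1 hc with ⟨hc1, hc2⟩
              simp only [Finset.mem_coe, Finset.mem_filter]
              refine ⟨hadd c hc1 g hgC, ?_⟩
              show ¬ (c i₀ + g i₀ = 0)
              rw [hc2, hg1]
              decide
            · intro c _
              funext i
              show c i + g i + g i = c i
              rw [add_assoc, zmod2_add_self, add_zero]
            · intro c _
              funext i
              show c i + g i + g i = c i
              rw [add_assoc, zmod2_add_self, add_zero]
            · intro c hc
              simp only [Finset.mem_filter] at hc
              have h1 : c i₀ = 1 := by
                rcases zmod2_cases (c i₀) with h | h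
                · exact absurd h hc.2
                · exact h
              rw [Finset.prod_insert hi₀]
              congr 1
              · have harg : (c + a) i₀ = 1 + a i₀ := by
                  simp only [Pi.add_apply]
                  rw [h1]
                rw [harg]
              · apply Finset.prod_congr rfl
                intro i hi
                have hne : i ≠ i₀ := fun h => hi₀ (h ▸ hi)
                have harg : (c + g + a') i + g' i = (c + a) i := by
                  simp only [Pi.add_apply]
                  rw [ha'eq i hne, hg'eq i hne]
                  exact zmod2_abcb (c i) (g i) (a i)
                rw [harg]
          rw [hpart1, hpart2]
      rw [hbij, hcard]
      -- now bound by A² + B² and apply IH twice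
      have hstep : ∑ a' ∈ gdual t C₀,
            (w i₀ (β a') * A a' + w i₀ (1 + β a') * B a') ^ 2
          ≤ ∑ a' ∈ gdual t C₀, ((A a') ^ 2 + (B a') ^ 2) := by
        apply Finset.sum_le_sum
        intro a' _
        have hcoef : (w i₀ (β a')) ^ 2 + (w i₀ (1 + β a')) ^ 2 = 1 := by
          rcases zmod2_cases (β a') with h | h <;> rw [h]
          · have h1 : (1 + 0 : ZMod 2) = 1 := by decide
            rw [h1]
            exact hw i₀ (Finset.mem_insert_self _ _)
          · have h1 : (1 + 1 : ZMod 2) = 0 := by decide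
            rw [h1]
            have := hw i₀ (Finset.mem_insert_self _ _)
            linarith
        nlinarith [sq_nonneg (w i₀ (β a') * B a' - w i₀ (1 + β a') * A a'),
          sq_nonneg (A a'), sq_nonneg (B a')]
      have hA : ∑ a' ∈ gdual t C₀, (A a') ^ 2 ≤ (C₀.card : ℝ) :=
        IH w C₀ hw_t h0₀ hadd₀ hsupp₀
      have hw2 : ∀ i ∈ t, (w i ((0 : ZMod 2) + g' i)) ^ 2 + (w i ((1 : ZMod 2) + g' i)) ^ 2 = 1 := by
        intro i hi
        rcases zmod2_cases (g' i) with h | h <;> rw [h]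
        · have h1 : ((0 : ZMod 2) + 0) = 0 := by decide
          have h2 : ((1 : ZMod 2) + 0) = 1 := by decide
          rw [h1, h2]
          exact hw_t i hi
        · have h1 : ((0 : ZMod 2) + 1) = 1 := by decide
          have h2 : ((1 : ZMod 2) + 1) = 0 := by decide
          rw [h1, h2]
          have := hw_t i hi
          linarith
      have hB : ∑ a' ∈ gdual t C₀, (B a') ^ 2 ≤ (C₀.card : ℝ) :=
        IH (fun i b => w i (b + g' i)) C₀ hw2 h0₀ hadd₀ hsupp₀
      calc ∑ a' ∈ gdual t C₀, (w i₀ (β a') * A a' + w i₀ (1 + β a') * B a') ^ 2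
          ≤ ∑ a' ∈ gdual t C₀, ((A a') ^ 2 + (B a') ^ 2) := hstep
        _ = (∑ a' ∈ gdual t C₀, (A a') ^ 2) + ∑ a' ∈ gdual t C₀, (B a') ^ 2 :=
            Finset.sum_add_distrib
        _ ≤ (C₀.card : ℝ) + (C₀.card : ℝ) := add_le_add hA hB
    · -- Case A : every codeword is 0 at i₀
      push_neg at hg
      have hall : ∀ c ∈ C, c i₀ = 0 := hg
      have hsupp' : ∀ c ∈ C, ∀ i, i ∉ t → c i = 0 := by
        intro c hc i hit
        by_cases h : i = i₀
        · subst h; exact hall c hc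
        · exact hsupp c hc i (by simp [h, hit])
      have hbij : ∑ a ∈ gdual (insert i₀ t) C, (∑ c ∈ C, ∏ i ∈ insert i₀ t, w i ((c + a) i)) ^ 2
          = ∑ p ∈ (gdual t C) ×ˢ (Finset.univ : Finset (ZMod 2)),
              (w i₀ p.2) ^ 2 * (∑ c ∈ C, ∏ i ∈ t, w i ((c + p.1) i)) ^ 2 := by
        refine Finset.sum_nbij' (i := fun a => (Function.update a i₀ 0, a i₀))
          (j := fun p => Function.update p.1 i₀ p.2) ?_ ?_ ?_ ?_ ?_
        · intro a ha
          rcases mem_gdual.1 ha with ⟨ha1, ha2⟩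
          refine Finset.mem_product.2 ⟨?_, Finset.mem_univ _⟩
          dsimp only
          rw [mem_gdual]
          constructor
          · intro i hit
            by_cases h : i = i₀
            · subst h; exact Function.update_self _ _ _
            · rw [Function.update_of_ne h]
              exact ha1 i (by simp [h, hit])
          · intro c hc
            rw [sum_split i₀, Function.update_self, zero_mul, zero_add]
            have hrest : ∀ i ∈ Finset.univ.erase i₀,
                (Function.update a i₀ 0) i * c i = a i * c i := by
              intro i hi
              rw [Function.update_of_ne (Finset.ne_of_mem_erase hi)]
            rw [Finset.sum_congr rfl hrest]
            have := sum_split i₀ (fun i => a i * c i)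
            rw [ha2 c hc, hall c hc, mul_zero, zero_add] at this
            exact this.symm
        · intro p hp
          rw [Finset.mem_product] at hp
          rcases mem_gdual.1 hp.1 with ⟨ha1, ha2⟩
          rw [mem_gdual]
          constructor
          · intro i hit
            have hne : i ≠ i₀ := by
              intro h; subst h; exact hit (Finset.mem_insert_self _ _)
            rw [Function.update_of_ne hne]
            exact ha1 i (fun h => hit (Finset.mem_insert_of_mem h))
          · intro c hc
            rw [sum_split i₀, Function.update_self, hall c hc, mul_zero, zero_add]
            have hrest : ∀ i ∈ Finset.univ.erase i₀,
                (Function.update p.1 i₀ p.2) i * c i = p.1 i * c i := by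
              intro i hi
              rw [Function.update_of_ne (Finset.ne_of_mem_erase hi)]
            rw [Finset.sum_congr rfl hrest]
            have := sum_split i₀ (fun i => p.1 i * c i)
            rw [ha2 c hc, ha1 i₀ hi₀, zero_mul, zero_add] at this
            exact this.symm
        · intro a ha
          dsimp only
          rw [Function.update_idem, Function.update_eq_self]
        · intro p hp
          rw [Finset.mem_product] at hp
          rcases mem_gdual.1 hp.1 with ⟨ha1, _⟩
          have h10 : p.1 i₀ = 0 := ha1 i₀ hi₀
          rw [Function.update_idem, Function.update_self]
          have hupd : Function.update p.1 i₀ 0 = p.1 := by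
            conv_lhs => rw [← h10]
            exact Function.update_eq_self _ _
          rw [hupd]
        · intro a ha
          dsimp only
          rcases mem_gdual.1 ha with ⟨ha1, ha2⟩
          have hinner : ∑ c ∈ C, ∏ i ∈ insert i₀ t, w i ((c + a) i)
              = w i₀ (a i₀) * ∑ c ∈ C, ∏ i ∈ t, w i ((c + Function.update a i₀ 0) i) := by
            rw [Finset.mul_sum]
            apply Finset.sum_congr rfl
            intro c hc
            rw [Finset.prod_insert hi₀]
            congr 1
            · have harg : (c + a) i₀ = a i₀ := by
                simp only [Pi.add_apply]
                rw [hall c hc, zero_add]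
              rw [harg]
            · apply Finset.prod_congr rfl
              intro i hi
              have hne : i ≠ i₀ := fun h => hi₀ (h ▸ hi)
              have harg : (c + Function.update a i₀ 0) i = (c + a) i := by
                simp only [Pi.add_apply]
                rw [Function.update_of_ne hne]
              rw [harg]
          rw [hinner, mul_pow]
      rw [hbij, Finset.sum_product]
      have hsum2 : ∀ a' ∈ gdual t C,
          ∑ ε : ZMod 2, (w i₀ ε) ^ 2 * (∑ c ∈ C, ∏ i ∈ t, w i ((c + a') i)) ^ 2
          = (∑ c ∈ C, ∏ i ∈ t, w i ((c + a') i)) ^ 2 := by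
        intro a' _
        rw [← Finset.sum_mul]
        have huniv : (Finset.univ : Finset (ZMod 2)) = {0, 1} := by decide
        rw [huniv, Finset.sum_pair (by decide : (0 : ZMod 2) ≠ 1),
          hw i₀ (Finset.mem_insert_self _ _), one_mul]
      rw [Finset.sum_congr rfl hsum2]
      exact IH w C hw_t h0 hadd hsupp'

end LemmaIII2Aux

theorem lemma_III_2 (n k : ℕ) (C : Submodule (ZMod 2) (Fin n → ZMod 2))
    (hk : Module.finrank (ZMod 2) C = k) (θ : ℝ) :
    (1 / 2 ^ k : ℝ) *
      ∑ a ∈ codewords (dualCode C),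
        (∑ c ∈ codewords C,
            Real.sin θ ^ (n - hammingNorm (c + a)) *
              Real.cos θ ^ (hammingNorm (c + a))) ^ 2 ≤ 1 := by
  classical
  set W : Fin n → ZMod 2 → ℝ := fun _ b => if b = 0 then Real.sin θ else Real.cos θ with hW
  have hwcond : ∀ i ∈ (Finset.univ : Finset (Fin n)), (W i 0) ^ 2 + (W i 1) ^ 2 = 1 := by
    intro i _
    simp only [hW, if_pos rfl, if_neg (by decide : ¬ ((1 : ZMod 2) = 0))]
    exact Real.sin_sq_add_cos_sq θ
  have h0 : (0 : Fin n → ZMod 2) ∈ codewords C := by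
    simp only [codewords, Finset.mem_filter, Finset.mem_univ, true_and]
    exact C.zero_mem
  have hadd : ∀ c ∈ codewords C, ∀ c' ∈ codewords C, c + c' ∈ codewords C := by
    intro c hc c' hc'
    simp only [codewords, Finset.mem_filter, Finset.mem_univ, true_and] at *
    exact C.add_mem hc hc'
  have hsupp : ∀ c ∈ codewords C, ∀ i : Fin n, i ∉ (Finset.univ : Finset (Fin n)) → c i = 0 :=
    fun c _ i hi => absurd (Finset.mem_univ i) hi
  have key := LemmaIII2Aux.core Finset.univ W (codewords C) hwcond h0 hadd hsupp
  have hdual : LemmaIII2Aux.gdual Finset.univ (codewords C) = codewords (dualCode C) := by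
    apply Finset.ext
    intro a
    rw [LemmaIII2Aux.mem_gdual]
    simp only [codewords, Finset.mem_filter, Finset.mem_univ, true_and]
    constructor
    · rintro ⟨_, h2⟩
      intro c hc
      exact h2 c (by simp [codewords, hc])
    · intro h
      refine ⟨fun i hi => absurd trivial hi, fun c hc => ?_⟩
      exact h c hc
  have hprod : ∀ x : Fin n → ZMod 2,
      (∏ i : Fin n, W i (x i))
        = Real.sin θ ^ (n - hammingNorm x) * Real.cos θ ^ (hammingNorm x) := by
    intro x
    rw [← Finset.prod_filter_mul_prod_filter_not Finset.univ (fun i => x i = 0)]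
    have h1 : ∏ i ∈ Finset.univ.filter (fun i => x i = 0), W i (x i)
        = Real.sin θ ^ (n - hammingNorm x) := by
      have hptw : ∀ i ∈ Finset.univ.filter (fun i => x i = 0), W i (x i) = Real.sin θ := by
        intro i hi
        simp only [Finset.mem_filter] at hi
        simp [hW, hi.2]
      have hcard1 : (Finset.univ.filter (fun i => x i = 0)).card = n - hammingNorm x := by
        have hcompl : Finset.univ.filter (fun i => x i = 0)
            = Finset.univ \ Finset.univ.filter (fun i => x i ≠ 0) := by
          rw [← Finset.filter_not]
          apply Finset.filter_congr
          intro i _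
          simp
        rw [hcompl, Finset.card_sdiff_of_subset (Finset.filter_subset _ _)]
        simp [hammingNorm]
      rw [Finset.prod_congr rfl hptw, Finset.prod_const, hcard1]
    have h2 : ∏ i ∈ Finset.univ.filter (fun i => ¬ x i = 0), W i (x i)
        = Real.cos θ ^ (hammingNorm x) := by
      have hptw : ∀ i ∈ Finset.univ.filter (fun i => ¬ x i = 0), W i (x i) = Real.cos θ := by
        intro i hi
        simp only [Finset.mem_filter] at hi
        simp [hW, hi.2]
      have hcard2 : (Finset.univ.filter (fun i => ¬ x i = 0)).card = hammingNorm x := by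
        simp [hammingNorm]
      rw [Finset.prod_congr rfl hptw, Finset.prod_const, hcard2]
    rw [h1, h2]
  rw [hdual] at key
  have keysum : ∑ a ∈ codewords (dualCode C),
      (∑ c ∈ codewords C,
          Real.sin θ ^ (n - hammingNorm (c + a)) * Real.cos θ ^ (hammingNorm (c + a))) ^ 2
      ≤ ((codewords C).card : ℝ) := by
    calc ∑ a ∈ codewords (dualCode C),
        (∑ c ∈ codewords C,
            Real.sin θ ^ (n - hammingNorm (c + a)) * Real.cos θ ^ (hammingNorm (c + a))) ^ 2
        = ∑ a ∈ codewords (dualCode C),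
            (∑ c ∈ codewords C, ∏ i ∈ Finset.univ, W i ((c + a) i)) ^ 2 := by
          apply Finset.sum_congr rfl
          intro a _
          congr 1
          apply Finset.sum_congr rfl
          intro c _
          exact (hprod (c + a)).symm
      _ ≤ ((codewords C).card : ℝ) := key
  have hcardC : ((codewords C).card : ℝ) = 2 ^ k := by
    have h1 : Fintype.card ↥C = (codewords C).card := by
      rw [codewords]
      exact Fintype.card_of_subtype _ (fun x => by simp)
    have h2 : Fintype.card ↥C = Fintype.card (ZMod 2) ^ Module.finrank (ZMod 2) ↥C :=
      Module.card_eq_pow_finrank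
    rw [← h1, h2, ZMod.card, hk]
    push_cast
    ring
  rw [hcardC] at keysum
  have hpos : (0 : ℝ) < 2 ^ k := by positivity
  calc (1 / 2 ^ k : ℝ) *
      ∑ a ∈ codewords (dualCode C),
        (∑ c ∈ codewords C,
            Real.sin θ ^ (n - hammingNorm (c + a)) *
              Real.cos θ ^ (hammingNorm (c + a))) ^ 2
      ≤ (1 / 2 ^ k : ℝ) * 2 ^ k := by
        apply mul_le_mul_of_nonneg_left keysum
        positivity
    _ = 1 := by field_simp
end

section
/- Let C be a k-dimensional weakly self-dual binary linear code of length n (i.e., C ⊆ C^⊥) and θ any real number. Then | Σ_{c ∈ C^⊥} (sin θ)^{n − wt(c)} (cos θ)^{wt(c)} | ≤ 2^{(n−2k)/2}. -/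
open scoped Classical

section LemmaIII3Aux

open Finset

/-- The real character of `ZMod 2`. -/
noncomputable def chiL3 (t : ZMod 2) : ℝ := if t = 0 then 1 else -1

lemma chiL3_zero : chiL3 0 = 1 := by simp [chiL3]

lemma chiL3_one : chiL3 1 = -1 := by
  simp [chiL3, show (1 : ZMod 2) ≠ 0 from by decide]

lemma chiL3_add (a b : ZMod 2) : chiL3 (a + b) = chiL3 a * chiL3 b := by
  rcases (by decide : ∀ t : ZMod 2, t = 0 ∨ t = 1) a with rfl | rfl <;> rcases (by decide : ∀ t : ZMod 2, t = 0 ∨ t = 1) b with rfl | rfl <;>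
    simp [chiL3, show ((1 : ZMod 2) + 1) = 0 from rfl, show (1 : ZMod 2) ≠ 0 from by decide]

lemma prod_chiL3 {ι : Type*} (s : Finset ι) (f : ι → ZMod 2) :
    ∏ i ∈ s, chiL3 (f i) = chiL3 (∑ i ∈ s, f i) := by
  induction s using Finset.cons_induction with
  | empty => simp [chiL3]
  | cons a s ha ih => rw [Finset.prod_cons, Finset.sum_cons, chiL3_add, ih]

lemma sum_zmod2L3 (h : ZMod 2 → ℝ) : ∑ b, h b = h 0 + h 1 := by
  rw [show (Finset.univ : Finset (ZMod 2)) = {0, 1} from rfl]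
  simp

lemma mem_codewordsL3 {n : ℕ} {C : Submodule (ZMod 2) (Fin n → ZMod 2)}
    {x : Fin n → ZMod 2} : x ∈ codewords C ↔ x ∈ C := by
  simp [codewords]

lemma card_codewordsL3 {n : ℕ} (C : Submodule (ZMod 2) (Fin n → ZMod 2)) :
    (codewords C).card = 2 ^ Module.finrank (ZMod 2) C := by
  have h1 : (codewords C).card = Fintype.card C := (Fintype.card_subtype _).symm
  rw [h1, Module.card_eq_pow_finrank (K := ZMod 2) (V := C), ZMod.card]

/-- Shifting by a codeword is a bijection of the code. -/
lemma sum_shiftL3 {n : ℕ} (C : Submodule (ZMod 2) (Fin n → ZMod 2))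
    (x0 : Fin n → ZMod 2) (hx0 : x0 ∈ C) (F : (Fin n → ZMod 2) → ℝ) :
    ∑ x ∈ codewords C, F (x + x0) = ∑ x ∈ codewords C, F x := by
  have hself : ∀ y : Fin n → ZMod 2, y + x0 + x0 = y := by
    intro y; funext i; simp [add_assoc, CharTwo.add_self_eq_zero]
  refine Finset.sum_nbij' (fun x => x + x0) (fun x => x + x0) ?_ ?_ ?_ ?_ ?_
  · intro a ha
    exact mem_codewordsL3.2 (C.add_mem (mem_codewordsL3.1 ha) hx0)
  · intro a ha
    exact mem_codewordsL3.2 (C.add_mem (mem_codewordsL3.1 ha) hx0)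
  · intro a _; exact hself a
  · intro a _; exact hself a
  · intro a _; rfl

/-- Character sum over a code. -/
lemma sum_chiL3 {n : ℕ} (C : Submodule (ZMod 2) (Fin n → ZMod 2)) (a : Fin n → ZMod 2) :
    ∑ x ∈ codewords C, ∏ i, chiL3 (a i * x i)
      = if a ∈ dualCode C then ((codewords C).card : ℝ) else 0 := by
  have hprod : ∀ x : Fin n → ZMod 2,
      (∏ i, chiL3 (a i * x i)) = chiL3 (∑ i, a i * x i) := fun x => prod_chiL3 _ _
  by_cases ha : a ∈ dualCode C
  · rw [if_pos ha, Finset.sum_congr rfl fun x hx => ?_]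
    · rw [Finset.sum_const, nsmul_eq_mul, mul_one]
    · rw [hprod x, ha x (mem_codewordsL3.1 hx), chiL3_zero]
  · rw [if_neg ha]
    have hex : ∃ x0 ∈ C, (∑ i, a i * x0 i) ≠ 0 := by
      by_contra h
      push_neg at h
      exact ha h
    obtain ⟨x0, hx0, hs⟩ := hex
    have hone : ∀ t : ZMod 2, t ≠ 0 → t = 1 := by decide
    have hs1 : (∑ i, a i * x0 i) = 1 := hone _ hs
    have key : ∀ x : Fin n → ZMod 2,
        (∏ i, chiL3 (a i * (x + x0) i)) = (∏ i, chiL3 (a i * x i)) * (-1) := by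
      intro x
      calc ∏ i, chiL3 (a i * (x + x0) i)
          = ∏ i, (chiL3 (a i * x i) * chiL3 (a i * x0 i)) := by
            refine Finset.prod_congr rfl fun i _ => ?_
            rw [show a i * (x + x0) i = a i * x i + a i * x0 i from by
              simp [Pi.add_apply, mul_add], chiL3_add]
        _ = (∏ i, chiL3 (a i * x i)) * ∏ i, chiL3 (a i * x0 i) :=
            Finset.prod_mul_distrib
        _ = (∏ i, chiL3 (a i * x i)) * (-1) := by rw [hprod x0, hs1, chiL3_one]
    have h2 := sum_shiftL3 C x0 hx0 (fun y => ∏ i, chiL3 (a i * y i))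
    simp only [key] at h2
    rw [← Finset.sum_mul] at h2
    linarith [h2]

end LemmaIII3Aux

section LemmaIII3Aux2

open Finset

lemma weight_prodL3 {n : ℕ} (s c : ℝ) (a : Fin n → ZMod 2) :
    ∏ i, (if a i = 0 then s else c) = s ^ (n - hammingNorm a) * c ^ (hammingNorm a) := by
  rw [Finset.prod_ite, Finset.prod_const, Finset.prod_const]
  have h1 : (Finset.univ.filter fun i => ¬ a i = 0).card = hammingNorm a := by
    simp [hammingNorm]
  have hle := Finset.card_filter_add_card_filter_not
    (s := (Finset.univ : Finset (Fin n))) (p := fun i => a i = 0)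
  rw [Finset.card_univ, Fintype.card_fin] at hle
  have h2 : (Finset.univ.filter fun i => a i = 0).card = n - hammingNorm a := by
    rw [← h1] at *; omega
  rw [h1, h2]

end LemmaIII3Aux2

section LemmaIII3Aux3

open Finset

lemma macwilliamsL3 {n : ℕ} (C : Submodule (ZMod 2) (Fin n → ZMod 2)) (s c : ℝ) :
    ((codewords C).card : ℝ) *
        ∑ a ∈ codewords (dualCode C), ∏ i, (if a i = 0 then s else c)
      = ∑ x ∈ codewords C, ∏ i, (s + chiL3 (x i) * c) := by
  set f : ZMod 2 → ℝ := fun b => if b = 0 then s else c with hf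
  have step1 : ((codewords C).card : ℝ) *
      ∑ a ∈ codewords (dualCode C), ∏ i, f (a i)
      = ∑ a : Fin n → ZMod 2,
          (∑ x ∈ codewords C, ∏ i, chiL3 (a i * x i)) * ∏ i, f (a i) := by
    rw [show codewords (dualCode C) = Finset.univ.filter (fun a => a ∈ dualCode C) from rfl,
      Finset.sum_filter, Finset.mul_sum]
    refine Finset.sum_congr rfl fun a _ => ?_
    rw [sum_chiL3]
    by_cases h : a ∈ dualCode C <;> simp [h]
  rw [step1]
  have step2 : ∑ a : Fin n → ZMod 2,
        (∑ x ∈ codewords C, ∏ i, chiL3 (a i * x i)) * ∏ i, f (a i)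
      = ∑ x ∈ codewords C, ∑ a : Fin n → ZMod 2,
          ∏ i, (chiL3 (a i * x i) * f (a i)) := by
    simp_rw [Finset.sum_mul]
    rw [Finset.sum_comm]
    refine Finset.sum_congr rfl fun x _ => Finset.sum_congr rfl fun a _ => ?_
    rw [Finset.prod_mul_distrib]
  rw [step2]
  refine Finset.sum_congr rfl fun x _ => ?_
  have step3 : ∑ a : Fin n → ZMod 2, ∏ i, (chiL3 (a i * x i) * f (a i))
      = ∏ i, ∑ b : ZMod 2, chiL3 (b * x i) * f b := by
    rw [Finset.prod_univ_sum]
    rw [Fintype.piFinset_univ]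
  rw [step3]
  refine Finset.prod_congr rfl fun i _ => ?_
  rw [sum_zmod2L3 (fun b => chiL3 (b * x i) * f b)]
  simp [hf, chiL3_zero, zero_mul, one_mul, chiL3,
    show (1 : ZMod 2) ≠ 0 from by decide]

end LemmaIII3Aux3

section LemmaIII3Aux4

open Finset

lemma csL3 {n : ℕ} (C : Submodule (ZMod 2) (Fin n → ZMod 2)) (hC : C ≤ dualCode C)
    (p q : ℝ) (hpq : p ^ 2 + q ^ 2 = 1) :
    |∑ x ∈ codewords C, ∏ i, (if x i = 0 then p else q)| ≤ 1 := by
  classical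
  set h0 : ZMod 2 → ℝ := fun b => if b = 0 then p else q with hh0
  set hm : ZMod 2 → ZMod 2 → ℝ := fun a b =>
    if a = 0 then (if b = 0 then p else q) else (if b = 0 then q else -p) with hhm
  set K : (Fin n → ZMod 2) → (Fin n → ZMod 2) → ℝ := fun x y => ∏ i, hm (x i) (y i) with hK
  set T : ℝ := ∑ x ∈ codewords C, ∏ i, h0 (x i) with hT
  set N : ℝ := ((codewords C).card : ℝ) with hN
  have hone : (1 : ZMod 2) ≠ 0 := by decide
  -- orthogonality of the 2×2 matrix rows
  have horth : ∀ a b : ZMod 2, (∑ t : ZMod 2, hm a t * hm b t) = if a = b then 1 else 0 := by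
    intro a b
    rw [sum_zmod2L3]
    rcases (by decide : ∀ t : ZMod 2, t = 0 ∨ t = 1) a with rfl | rfl <;> rcases (by decide : ∀ t : ZMod 2, t = 0 ∨ t = 1) b with rfl | rfl <;> simp [hhm, hone] <;> nlinarith [hpq]
  -- orthogonality of the big kernel
  have hKorth : ∀ x y : Fin n → ZMod 2,
      (∑ z : Fin n → ZMod 2, K x z * K y z) = if x = y then 1 else 0 := by
    intro x y
    have e1 : ∀ z : Fin n → ZMod 2, K x z * K y z
        = ∏ i, (hm (x i) (z i) * hm (y i) (z i)) := by
      intro z; rw [hK]; exact (Finset.prod_mul_distrib).symm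
    calc ∑ z : Fin n → ZMod 2, K x z * K y z
        = ∑ z : Fin n → ZMod 2, ∏ i, (hm (x i) (z i) * hm (y i) (z i)) :=
          Finset.sum_congr rfl fun z _ => e1 z
      _ = ∏ i, ∑ t : ZMod 2, hm (x i) t * hm (y i) t := by
          rw [Finset.prod_univ_sum, Fintype.piFinset_univ]
      _ = ∏ i, (if x i = y i then (1 : ℝ) else 0) :=
          Finset.prod_congr rfl fun i _ => horth _ _
      _ = if x = y then 1 else 0 := by
          rw [Finset.prod_boole]
          by_cases h : x = y
          · simp [h]
          · have h' : ¬ ∀ i, x i = y i := fun hh => h (funext hh)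
            simp [h, h']
  -- for codewords, the kernel collapses to h0 of the sum
  have hKadd : ∀ x ∈ codewords C, ∀ y ∈ codewords C, K x y = ∏ i, h0 ((x + y) i) := by
    intro x hx y hy
    have hxy : ∀ a b : ZMod 2,
        hm a b = (if a = 1 ∧ b = 1 then (-1 : ℝ) else 1) * h0 (a + b) := by
      intro a b
      rcases (by decide : ∀ t : ZMod 2, t = 0 ∨ t = 1) a with rfl | rfl <;> rcases (by decide : ∀ t : ZMod 2, t = 0 ∨ t = 1) b with rfl | rfl <;>
        simp [hhm, hh0, hone, show ((1 : ZMod 2) + 1) = 0 from rfl]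
    have hmul : ∀ a b : ZMod 2, a * b = (if a = 1 ∧ b = 1 then (1 : ZMod 2) else 0) := by decide
    calc K x y
        = ∏ i, ((if x i = 1 ∧ y i = 1 then (-1 : ℝ) else 1) * h0 ((x + y) i)) := by
          rw [hK]
          exact Finset.prod_congr rfl fun i _ => by rw [hxy (x i) (y i)]; rfl
      _ = (∏ i, (if x i = 1 ∧ y i = 1 then (-1 : ℝ) else 1)) * ∏ i, h0 ((x + y) i) :=
          Finset.prod_mul_distrib
      _ = ∏ i, h0 ((x + y) i) := by
          have hsgn : (∏ i, (if x i = 1 ∧ y i = 1 then (-1 : ℝ) else 1)) = 1 := by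
            rw [Finset.prod_ite, Finset.prod_const, Finset.prod_const, one_pow, mul_one]
            have hzero : ((Finset.univ.filter fun i => x i = 1 ∧ y i = 1).card : ZMod 2) = 0 := by
              have hdual := hC (mem_codewordsL3.1 hx) y (mem_codewordsL3.1 hy)
              rw [← Finset.sum_boole]
              rw [← Finset.sum_congr rfl fun i (_ : i ∈ Finset.univ) => hmul (x i) (y i)]
              exact hdual
            have heven : Even (Finset.univ.filter fun i => x i = 1 ∧ y i = 1).card := by
              rw [ZMod.natCast_eq_zero_iff] at hzero
              exact even_iff_two_dvd.2 hzero
            exact heven.neg_one_pow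
          rw [hsgn, one_mul]
  -- row sums over the code all equal T
  have hrow : ∀ y ∈ codewords C, (∑ x ∈ codewords C, K x y) = T := by
    intro y hy
    calc ∑ x ∈ codewords C, K x y
        = ∑ x ∈ codewords C, ∏ i, h0 ((x + y) i) :=
          Finset.sum_congr rfl fun x hx => hKadd x hx y hy
      _ = ∑ x ∈ codewords C, ∏ i, h0 (x i) :=
          sum_shiftL3 C y (mem_codewordsL3.1 hy) (fun z => ∏ i, h0 (z i))
      _ = T := rfl
  -- the double sum
  have hD : (∑ y ∈ codewords C, ∑ x ∈ codewords C, K x y) = N * T := by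
    rw [Finset.sum_congr rfl hrow, Finset.sum_const, nsmul_eq_mul, hN]
  -- Cauchy–Schwarz
  set w : (Fin n → ZMod 2) → ℝ := fun y => ∑ x ∈ codewords C, K x y with hw
  have hCS : (∑ y ∈ codewords C, w y) ^ 2
      ≤ (∑ y ∈ codewords C, (1 : ℝ) ^ 2) * ∑ y ∈ codewords C, w y ^ 2 := by
    have := Finset.sum_mul_sq_le_sq_mul_sq (codewords C) (fun _ => (1 : ℝ)) w
    simpa using this
  have hsub : (∑ y ∈ codewords C, w y ^ 2) ≤ ∑ y : Fin n → ZMod 2, w y ^ 2 := by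
    refine Finset.sum_le_sum_of_subset_of_nonneg (Finset.subset_univ _) ?_
    intro y _ _; exact sq_nonneg _
  have hfull : (∑ y : Fin n → ZMod 2, w y ^ 2) = N := by
    have expand : ∀ y : Fin n → ZMod 2, w y ^ 2
        = ∑ x ∈ codewords C, ∑ x' ∈ codewords C, K x y * K x' y := by
      intro y
      rw [hw, sq, Finset.sum_mul_sum]
    rw [Finset.sum_congr rfl fun y _ => expand y]
    rw [Finset.sum_comm]
    have inner : ∀ x ∈ codewords C,
        (∑ y : Fin n → ZMod 2, ∑ x' ∈ codewords C, K x y * K x' y) = 1 := by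
      intro x hx
      rw [Finset.sum_comm]
      have : ∀ x' ∈ codewords C, (∑ y : Fin n → ZMod 2, K x y * K x' y) =
          if x = x' then (1 : ℝ) else 0 := fun x' _ => hKorth x x'
      rw [Finset.sum_congr rfl this, Finset.sum_ite_eq]
      simp [hx]
    rw [Finset.sum_congr rfl inner, Finset.sum_const, nsmul_eq_mul, mul_one, hN]
  have hN1 : (1 : ℝ) ≤ N := by
    rw [hN]
    have : 0 < (codewords C).card := Finset.card_pos.2 ⟨0, mem_codewordsL3.2 C.zero_mem⟩
    exact_mod_cast this
  have hone2 : (∑ y ∈ codewords C, (1 : ℝ) ^ 2) = N := by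
    simp [hN]
  have hkey : (N * T) ^ 2 ≤ N * N := by
    calc (N * T) ^ 2 = (∑ y ∈ codewords C, w y) ^ 2 := by rw [← hD]
      _ ≤ (∑ y ∈ codewords C, (1 : ℝ) ^ 2) * ∑ y ∈ codewords C, w y ^ 2 := hCS
      _ ≤ N * ∑ y : Fin n → ZMod 2, w y ^ 2 := by
          rw [hone2]
          exact mul_le_mul_of_nonneg_left hsub (by linarith)
      _ = N * N := by rw [hfull]
  have hT2 : T ^ 2 ≤ 1 := by
    by_contra h
    push_neg at h
    have hNpos : 0 < N * N := by nlinarith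
    have h1 : N * N * 1 < N * N * T ^ 2 := by
      exact mul_lt_mul_of_pos_left h hNpos
    have h2 : (N * T) ^ 2 = N * N * T ^ 2 := by ring
    nlinarith [hkey]
  have : |T| ≤ 1 := by
    rw [abs_le]; constructor <;> nlinarith [hT2]
  exact this

end LemmaIII3Aux4

theorem lemma_III_3 (n k : ℕ) (C : Submodule (ZMod 2) (Fin n → ZMod 2))
    (hk : Module.finrank (ZMod 2) C = k) (hC : C ≤ dualCode C) (θ : ℝ) :
    |∑ c ∈ codewords (dualCode C),
        Real.sin θ ^ (n - hammingNorm c) * Real.cos θ ^ (hammingNorm c)|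
      ≤ 2 ^ (((n : ℝ) - 2 * k) / 2) := by
  classical
  set s := Real.sin θ with hs
  set c := Real.cos θ with hc
  have hsqrt2 : (0 : ℝ) < Real.sqrt 2 := Real.sqrt_pos.2 (by norm_num)
  set p : ℝ := (s + c) / Real.sqrt 2 with hp
  set q : ℝ := (s - c) / Real.sqrt 2 with hq
  have hsq2 : (Real.sqrt 2) ^ 2 = 2 := Real.sq_sqrt (by norm_num)
  have hpq : p ^ 2 + q ^ 2 = 1 := by
    have h1 : s ^ 2 + c ^ 2 = 1 := Real.sin_sq_add_cos_sq θ
    rw [hp, hq, div_pow, div_pow, hsq2]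
    linear_combination (1 / 2 : ℝ) * h1 + h1 / 2
  set S := ∑ a ∈ codewords (dualCode C), s ^ (n - hammingNorm a) * c ^ (hammingNorm a) with hS
  have hSprod : S = ∑ a ∈ codewords (dualCode C), ∏ i, (if a i = 0 then s else c) :=
    Finset.sum_congr rfl fun a _ => (weight_prodL3 s c a).symm
  set N : ℝ := ((codewords C).card : ℝ) with hN
  have hNval : N = 2 ^ k := by
    rw [hN, card_codewordsL3, hk]; push_cast; ring
  have hMW := macwilliamsL3 C s c
  have hfac1 : ∀ b : ZMod 2, s + chiL3 b * c = Real.sqrt 2 * (if b = 0 then p else q) := by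
    intro b
    by_cases hb : b = 0
    · rw [if_pos hb, hb, chiL3_zero, hp]
      field_simp
    · have hb1 : b = 1 := by
        have : ∀ t : ZMod 2, t ≠ 0 → t = 1 := by decide
        exact this b hb
      rw [if_neg hb, hb1, chiL3_one, hq]
      field_simp
      ring
  have hfac : ∀ x : Fin n → ZMod 2,
      (∏ i, (s + chiL3 (x i) * c))
        = (Real.sqrt 2) ^ n * ∏ i, (if x i = 0 then p else q) := by
    intro x
    calc ∏ i, (s + chiL3 (x i) * c)
        = ∏ i, (Real.sqrt 2 * (if x i = 0 then p else q)) :=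
          Finset.prod_congr rfl fun i _ => hfac1 (x i)
      _ = (∏ _i : Fin n, Real.sqrt 2) * ∏ i, (if x i = 0 then p else q) :=
          Finset.prod_mul_distrib
      _ = (Real.sqrt 2) ^ n * ∏ i, (if x i = 0 then p else q) := by
          rw [Finset.prod_const, Finset.card_univ, Fintype.card_fin]
  have hTbound := csL3 C hC p q hpq
  set T := ∑ x ∈ codewords C, ∏ i, (if x i = 0 then p else q) with hT
  have hNS : N * S = (Real.sqrt 2) ^ n * T := by
    calc N * S = ∑ x ∈ codewords C, ∏ i, (s + chiL3 (x i) * c) := by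
          rw [hSprod]; exact hMW
      _ = ∑ x ∈ codewords C, (Real.sqrt 2) ^ n * ∏ i, (if x i = 0 then p else q) :=
          Finset.sum_congr rfl fun x _ => hfac x
      _ = (Real.sqrt 2) ^ n * T := by rw [← Finset.mul_sum]
  have hNpos : 0 < N := by rw [hNval]; positivity
  have habs : N * |S| ≤ (Real.sqrt 2) ^ n := by
    calc N * |S| = |N * S| := by rw [abs_mul, abs_of_pos hNpos]
      _ = (Real.sqrt 2) ^ n * |T| := by
          rw [hNS, abs_mul, abs_of_nonneg (pow_nonneg hsqrt2.le n)]
      _ ≤ (Real.sqrt 2) ^ n * 1 := mul_le_mul_of_nonneg_left hTbound (pow_nonneg hsqrt2.le n)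
      _ = (Real.sqrt 2) ^ n := mul_one _
  have hfinal : |S| ≤ (Real.sqrt 2) ^ n / N := by
    rw [le_div_iff₀ hNpos]
    linarith [habs]
  have hRHS : (Real.sqrt 2) ^ n / N = 2 ^ (((n : ℝ) - 2 * k) / 2) := by
    rw [hNval, Real.sqrt_eq_rpow, ← Real.rpow_natCast ((2 : ℝ) ^ ((1 : ℝ) / 2)) n,
      ← Real.rpow_mul (by norm_num : (0 : ℝ) ≤ 2), ← Real.rpow_natCast (2 : ℝ) k,
      ← Real.rpow_sub (by norm_num : (0 : ℝ) < 2)]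
    congr 1
    ring
  rw [← hRHS]
  exact hfinal
end

section
/- Let C be a weakly self-dual binary linear code of even length n with weight distribution (A_0, …, A_n) (so A_j = 0 for odd j). Then for every real λ with 0 < λ < 1, Σ_{j=0}^{n/2} A_{2j} λ^j ≤ (1+λ)^{n/2}. -/
open scoped Classical

/-! ### Auxiliary machinery -/

noncomputable def eps (x : ZMod 2) : ℂ := if x = 0 then 1 else -1

lemma zmod2_cases (x : ZMod 2) : x = 0 ∨ x = 1 := by revert x; decide

@[simp] lemma eps_zero : eps 0 = 1 := by simp [eps]
@[simp] lemma eps_one : eps 1 = -1 := by simp [eps]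

lemma eps_add (x y : ZMod 2) : eps (x + y) = eps x * eps y := by
  rcases zmod2_cases x with hx | hx <;> rcases zmod2_cases y with hy | hy <;>
    subst hx <;> subst hy <;> simp [eps, show (1+1:ZMod 2) = 0 by decide]

lemma eps_sum {ι : Type*} (s : Finset ι) (f : ι → ZMod 2) :
    eps (∑ i ∈ s, f i) = ∏ i ∈ s, eps (f i) := by
  induction s using Finset.cons_induction with
  | empty => simp
  | cons a s ha ih => rw [Finset.sum_cons, Finset.prod_cons, eps_add, ih]

lemma eps_natCast (m : ℕ) : eps (m : ZMod 2) = (-1 : ℂ) ^ m := by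
  induction m with
  | zero => simp
  | succ k ih => rw [Nat.cast_succ, eps_add, ih, pow_succ, eps_one]

lemma sum_zmod2 (f : ZMod 2 → ℂ) : ∑ x : ZMod 2, f x = f 0 + f 1 := by
  have h : (Finset.univ : Finset (ZMod 2)) = {0, 1} := by decide
  rw [h, Finset.sum_pair (by decide)]

variable {n : ℕ}

noncomputable def ovl (c c' : Fin n → ZMod 2) : ℕ :=
  (Finset.univ.filter fun i => c i = 1 ∧ c' i = 1).card

lemma hammingNorm_eq (c : Fin n → ZMod 2) :
    hammingNorm c = (Finset.univ.filter fun i => c i = 1).card := by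
  unfold hammingNorm
  refine congrArg Finset.card (Finset.filter_congr fun i _ => ?_)
  rcases zmod2_cases (c i) with h | h <;>
    simp [h, show (0:ZMod 2) ≠ 1 by decide, show (1:ZMod 2) ≠ 0 by decide]

lemma wt_add (c c' : Fin n → ZMod 2) :
    hammingNorm (c + c') + 2 * ovl c c' = hammingNorm c + hammingNorm c' := by
  rw [hammingNorm_eq, hammingNorm_eq, hammingNorm_eq, ovl, Finset.card_filter,
    Finset.card_filter, Finset.card_filter, Finset.card_filter, Finset.mul_sum,
    ← Finset.sum_add_distrib, ← Finset.sum_add_distrib]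
  refine Finset.sum_congr rfl fun i _ => ?_
  have hadd : (c + c') i = c i + c' i := rfl
  rcases zmod2_cases (c i) with h | h <;> rcases zmod2_cases (c' i) with h' | h' <;>
    simp [hadd, h, h', show (1+1:ZMod 2) = 0 by decide, show (0:ZMod 2) ≠ 1 by decide,
      show (1:ZMod 2) ≠ 0 by decide]

lemma parity_ovl (c c' : Fin n → ZMod 2) :
    (∑ i, c i * c' i) = (ovl c c' : ZMod 2) := by
  rw [ovl, Finset.card_filter, Nat.cast_sum]
  refine Finset.sum_congr rfl fun i _ => ?_
  rcases zmod2_cases (c i) with h | h <;> rcases zmod2_cases (c' i) with h' | h' <;>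
    simp [h, h', show ((0:ℕ):ZMod 2) = 0 by decide, show (0:ZMod 2) ≠ 1 by decide]

lemma ovl_self (c : Fin n → ZMod 2) : ovl c c = hammingNorm c := by
  rw [ovl, hammingNorm_eq]
  exact congrArg Finset.card (Finset.filter_congr fun i _ => by simp)

lemma mem_dualCode {E : Submodule (ZMod 2) (Fin n → ZMod 2)} {x : Fin n → ZMod 2} :
    x ∈ dualCode E ↔ ∀ c ∈ E, ∑ i, x i * c i = 0 := Iff.rfl

lemma mem_codewords {E : Submodule (ZMod 2) (Fin n → ZMod 2)} {x : Fin n → ZMod 2} :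
    x ∈ codewords E ↔ x ∈ E := by simp [codewords]

lemma le_dual_dual (C : Submodule (ZMod 2) (Fin n → ZMod 2)) : C ≤ dualCode (dualCode C) := by
  intro c hc b hb
  have := hb c hc
  rwa [Finset.sum_congr rfl fun i _ => mul_comm (c i) (b i)]

lemma dual_antitone {C D : Submodule (ZMod 2) (Fin n → ZMod 2)} (h : C ≤ D) :
    dualCode D ≤ dualCode C := fun a ha c hc => ha c (h hc)

lemma char_sum (E : Submodule (ZMod 2) (Fin n → ZMod 2)) (x : Fin n → ZMod 2) :
    ∑ a ∈ codewords E, eps (∑ i, a i * x i) =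
      if x ∈ dualCode E then ((codewords E).card : ℂ) else 0 := by
  by_cases hx : x ∈ dualCode E
  · rw [if_pos hx]
    rw [Finset.sum_congr rfl fun a ha => ?_, Finset.sum_const, nsmul_eq_mul, mul_one]
    have h0 : (∑ i, a i * x i) = 0 := by
      rw [Finset.sum_congr rfl fun i _ => mul_comm (a i) (x i)]
      exact hx a (mem_codewords.mp ha)
    rw [h0, eps_zero]
  · rw [if_neg hx]
    rw [mem_dualCode] at hx
    push_neg at hx
    obtain ⟨a₀, ha₀E, ha₀⟩ := hx
    have h1 : (∑ i, a₀ i * x i) = 1 := by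
      rw [Finset.sum_congr rfl fun i _ => mul_comm (a₀ i) (x i)]
      rcases zmod2_cases (∑ i, x i * a₀ i) with h | h
      · exact absurd h ha₀
      · exact h
    set S := ∑ a ∈ codewords E, eps (∑ i, a i * x i) with hSdef
    have key : ∀ a : Fin n → ZMod 2, a₀ + (a₀ + a) = a := by
      intro a; funext i
      show a₀ i + (a₀ i + a i) = a i
      rw [← add_assoc, CharTwo.add_self_eq_zero, zero_add]
    have hS : S = -S := by
      calc S = ∑ a ∈ codewords E, eps (∑ i, (a₀ + a) i * x i) := by
            refine Finset.sum_equiv (Equiv.addLeft a₀) (fun a => ?_)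
              (fun a ha => by simp only [Equiv.coe_addLeft]; rw [key a])
            simp only [Equiv.coe_addLeft, mem_codewords]
            constructor
            · intro h; exact E.add_mem ha₀E h
            · intro h; exact key a ▸ E.add_mem ha₀E h
        _ = ∑ a ∈ codewords E, -eps (∑ i, a i * x i) := by
            refine Finset.sum_congr rfl fun a ha => ?_
            have hsplit : (∑ i, (a₀ + a) i * x i) = (∑ i, a₀ i * x i) + ∑ i, a i * x i := by
              rw [← Finset.sum_add_distrib]
              exact Finset.sum_congr rfl fun i _ => by simp [add_mul]
            rw [hsplit, eps_add, h1, eps_one, neg_mul, one_mul]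
        _ = -S := by rw [← Finset.sum_neg_distrib]
    have h2 : (2:ℂ) * S = 0 := by linear_combination hS
    exact (mul_eq_zero.mp h2).resolve_left two_ne_zero

lemma prod_factor (ω : ℂ) (w c : Fin n → ZMod 2) :
    ∏ i, (if c i = 0 then 1 else eps (w i) * ω) =
      eps (∑ i, w i * c i) * ω ^ hammingNorm c := by
  rw [eps_sum, hammingNorm_eq]
  have hpow : ω ^ (Finset.univ.filter fun i => c i = 1).card
      = ∏ i, (if c i = 1 then ω else (1:ℂ)) := by
    rw [Finset.prod_ite, Finset.prod_const, Finset.prod_const_one, mul_one]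
  rw [hpow, ← Finset.prod_mul_distrib]
  refine Finset.prod_congr rfl fun i _ => ?_
  rcases zmod2_cases (c i) with h | h <;>
    simp [h, show (0:ZMod 2) ≠ 1 by decide, show (1:ZMod 2) ≠ 0 by decide]

lemma exists_z (D : Submodule (ZMod 2) (Fin n → ZMod 2))
    (horth : ∀ c ∈ D, ∀ c' ∈ D, (∑ i, c i * c' i) = 0) :
    ∃ z : Fin n → ZMod 2, ∀ c ∈ D,
      (∑ i, z i * c i) = ((hammingNorm c / 2 : ℕ) : ZMod 2) := by
  have heven : ∀ c ∈ D, 2 ∣ hammingNorm c := by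
    intro c hc
    have h := (parity_ovl c c).symm
    rw [horth c hc c hc, ovl_self] at h
    exact (ZMod.natCast_eq_zero_iff _ 2).mp h
  have hovl_even : ∀ c ∈ D, ∀ c' ∈ D, 2 ∣ ovl c c' := by
    intro c hc c' hc'
    have h := (parity_ovl c c').symm
    rw [horth c hc c' hc'] at h
    exact (ZMod.natCast_eq_zero_iff _ 2).mp h
  have hadd : ∀ c ∈ D, ∀ c' ∈ D,
      ((hammingNorm (c + c') / 2 : ℕ) : ZMod 2)
        = ((hammingNorm c / 2 : ℕ) : ZMod 2) + ((hammingNorm c' / 2 : ℕ) : ZMod 2) := by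
    intro c hc c' hc'
    have h1 := wt_add c c'
    obtain ⟨u, hu⟩ := heven c hc
    obtain ⟨v, hv⟩ := heven c' hc'
    obtain ⟨w, hw⟩ := heven (c + c') (D.add_mem hc hc')
    obtain ⟨s, hs⟩ := hovl_even c hc c' hc'
    have hnat : hammingNorm (c + c') / 2 + 2 * s
        = hammingNorm c / 2 + hammingNorm c' / 2 := by omega
    have := congrArg (Nat.cast : ℕ → ZMod 2) hnat
    rw [Nat.cast_add, Nat.cast_add, Nat.cast_mul] at this
    simpa [show ((2:ℕ):ZMod 2) = 0 by decide, show (2:ZMod 2) = 0 by decide] using this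
  let φ : D →ₗ[ZMod 2] ZMod 2 :=
    { toFun := fun c => ((hammingNorm (c : Fin n → ZMod 2) / 2 : ℕ) : ZMod 2)
      map_add' := fun c c' => hadd c.1 c.2 c'.1 c'.2
      map_smul' := by
        intro m c
        rcases zmod2_cases m with h | h <;> subst h
        · simp
        · simp }
  obtain ⟨g, hg⟩ := LinearMap.exists_extend φ
  refine ⟨fun i => g (fun j => if i = j then 1 else 0), fun c hc => ?_⟩
  have h1 : g c = ∑ i, c i * (g fun j => if i = j then 1 else 0) := by
    rw [LinearMap.pi_apply_eq_sum_univ g c]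
    exact Finset.sum_congr rfl fun i _ => by rw [smul_eq_mul]
  have h2 : g c = φ ⟨c, hc⟩ := by
    rw [← hg]; rfl
  rw [Finset.sum_congr rfl fun i _ => mul_comm _ (c i), ← h1, h2]
  rfl

theorem lemma_III_4 (n : ℕ) (hn : Even n)
    (C : Submodule (ZMod 2) (Fin n → ZMod 2)) (hC : C ≤ dualCode C)
    (lam : ℝ) (hlam : 0 < lam) (hlam1 : lam < 1) :
    ∑ j ∈ Finset.range (n / 2 + 1), (weightDist C (2 * j) : ℝ) * lam ^ j
      ≤ (1 + lam) ^ (n / 2) := by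
  classical
  obtain ⟨m, hm⟩ := hn
  set E := dualCode C with hE
  set D := dualCode E with hD
  have hCD : C ≤ D := le_dual_dual C
  have hDE : D ≤ E := by rw [hD, hE]; exact dual_antitone hC
  have horth : ∀ c ∈ D, ∀ c' ∈ D, (∑ i, c i * c' i) = 0 := by
    intro c hc c' hc'
    exact hc c' (hDE hc')
  have heven : ∀ c ∈ D, 2 ∣ hammingNorm c := by
    intro c hc
    have h := (parity_ovl c c).symm
    rw [horth c hc c hc, ovl_self] at h
    exact (ZMod.natCast_eq_zero_iff _ 2).mp h
  obtain ⟨z, hz⟩ := exists_z D horth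
  set s : ℝ := Real.sqrt lam with hs
  set ω : ℂ := Complex.I * (s : ℂ) with hω
  set N := (codewords E).card with hN
  set W : ℝ := ∑ c ∈ codewords D, lam ^ (hammingNorm c / 2) with hW
  have hwle : ∀ c : Fin n → ZMod 2, hammingNorm c / 2 ∈ Finset.range (n / 2 + 1) := by
    intro c
    rw [Finset.mem_range]
    have h1 : hammingNorm c ≤ n := by
      calc hammingNorm c ≤ (Finset.univ : Finset (Fin n)).card := Finset.card_filter_le _ _
        _ = n := by simp
    omega
  -- Step 1 : LHS ≤ W
  have hstep1 : ∑ j ∈ Finset.range (n / 2 + 1), (weightDist C (2 * j) : ℝ) * lam ^ j ≤ W := by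
    rw [hW, ← Finset.sum_fiberwise_of_maps_to (g := fun c => hammingNorm c / 2)
      (fun c _ => hwle c) (fun c => lam ^ (hammingNorm c / 2))]
    refine Finset.sum_le_sum fun j hj => ?_
    have hinner : ∑ c ∈ (codewords D).filter (fun c => hammingNorm c / 2 = j),
        lam ^ (hammingNorm c / 2)
        = (((codewords D).filter (fun c => hammingNorm c / 2 = j)).card : ℝ) * lam ^ j := by
      rw [Finset.sum_congr rfl (fun c hc => by rw [(Finset.mem_filter.mp hc).2]),
        Finset.sum_const, nsmul_eq_mul]
    rw [hinner]
    refine mul_le_mul_of_nonneg_right ?_ (le_of_lt (pow_pos hlam j))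
    have hsub : (Finset.univ.filter (fun c => c ∈ C ∧ hammingNorm c = 2 * j))
        ⊆ (codewords D).filter (fun c => hammingNorm c / 2 = j) := by
      intro c hcmem
      rw [Finset.mem_filter] at hcmem
      obtain ⟨hcC, hwt⟩ := hcmem.2
      rw [Finset.mem_filter]
      exact ⟨mem_codewords.mpr (hCD hcC), by rw [hwt]; omega⟩
    exact_mod_cast Nat.cast_le.mpr (Finset.card_le_card hsub)
  -- Step 2 : the Fourier identity
  have hNpos : (0:ℝ) < (N : ℝ) := by
    have h0 : (0 : Fin n → ZMod 2) ∈ codewords E := mem_codewords.mpr E.zero_mem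
    exact_mod_cast Finset.card_pos.mpr ⟨0, h0⟩
  have hω2 : ω ^ 2 = -(lam : ℂ) := by
    rw [hω, mul_pow, Complex.I_sq, ← Complex.ofReal_pow, Real.sq_sqrt hlam.le, neg_one_mul]
  have hterm : ∀ c ∈ codewords D,
      eps (∑ i, z i * c i) * ω ^ hammingNorm c = ((lam ^ (hammingNorm c / 2) : ℝ) : ℂ) := by
    intro c hc
    have hcD := mem_codewords.mp hc
    obtain ⟨k, hk⟩ := heven c hcD
    have hdiv : hammingNorm c / 2 = k := by omega
    rw [hz c hcD, eps_natCast, hdiv, hk, pow_mul, hω2, ← mul_pow, neg_one_mul, neg_neg,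
      Complex.ofReal_pow]
  have hT : ∑ a ∈ codewords E, ∏ i, (1 + eps (a i + z i) * ω) = (N : ℂ) * ((W : ℝ) : ℂ) := by
    have hexp : ∀ a : Fin n → ZMod 2,
        (∏ i, (1 + eps (a i + z i) * ω))
          = ∑ c : Fin n → ZMod 2, ∏ i, (if c i = 0 then 1 else eps (a i + z i) * ω) := by
      intro a
      have h1 : ∀ i : Fin n, (1 + eps (a i + z i) * ω)
          = ∑ x : ZMod 2, (if x = 0 then 1 else eps (a i + z i) * ω) := by
        intro i
        rw [sum_zmod2]
        simp
      rw [Finset.prod_congr rfl (fun i _ => h1 i), Fintype.prod_sum]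
    have hc_inner : ∀ c : Fin n → ZMod 2,
        ∑ a ∈ codewords E, ∏ i, (if c i = 0 then 1 else eps (a i + z i) * ω)
          = (eps (∑ i, z i * c i) * ω ^ hammingNorm c) * (if c ∈ D then (N : ℂ) else 0) := by
      intro c
      have h1 : ∀ a : Fin n → ZMod 2,
          (∏ i, (if c i = 0 then 1 else eps (a i + z i) * ω))
            = eps (∑ i, a i * c i) * (eps (∑ i, z i * c i) * ω ^ hammingNorm c) := by
        intro a
        rw [prod_factor ω (fun i => a i + z i) c]
        have hsplit : (∑ i, (a i + z i) * c i) = (∑ i, a i * c i) + ∑ i, z i * c i := by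
          rw [← Finset.sum_add_distrib]
          exact Finset.sum_congr rfl fun i _ => add_mul _ _ _
        rw [hsplit, eps_add, mul_assoc]
      rw [Finset.sum_congr rfl (fun a _ => h1 a), ← Finset.sum_mul, char_sum E c, ← hD, ← hN]
      rw [mul_comm]
    calc ∑ a ∈ codewords E, ∏ i, (1 + eps (a i + z i) * ω)
        = ∑ a ∈ codewords E, ∑ c : Fin n → ZMod 2,
            ∏ i, (if c i = 0 then 1 else eps (a i + z i) * ω) := by
          exact Finset.sum_congr rfl fun a _ => hexp a
      _ = ∑ c : Fin n → ZMod 2, ∑ a ∈ codewords E,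
            ∏ i, (if c i = 0 then 1 else eps (a i + z i) * ω) := Finset.sum_comm
      _ = ∑ c : Fin n → ZMod 2,
            (eps (∑ i, z i * c i) * ω ^ hammingNorm c) * (if c ∈ D then (N : ℂ) else 0) := by
          exact Finset.sum_congr rfl fun c _ => hc_inner c
      _ = ∑ c ∈ codewords D, (eps (∑ i, z i * c i) * ω ^ hammingNorm c) * (N : ℂ) := by
          rw [codewords, Finset.sum_filter]
          exact Finset.sum_congr rfl fun c _ => by
            by_cases h : c ∈ D <;> simp [h]
      _ = (N : ℂ) * ∑ c ∈ codewords D, ((lam ^ (hammingNorm c / 2) : ℝ) : ℂ) := by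
          rw [Finset.mul_sum]
          exact Finset.sum_congr rfl fun c hc => by rw [hterm c hc, mul_comm]
      _ = (N : ℂ) * ((W : ℝ) : ℂ) := by
          rw [hW, Complex.ofReal_sum]
  -- Step 3 : the bound on the absolute value
  have hfac : ∀ x : ZMod 2, ‖1 + eps x * ω‖ = Real.sqrt (1 + lam) := by
    intro x
    have hss : s ^ 2 = lam := Real.sq_sqrt hlam.le
    rcases zmod2_cases x with h | h <;> subst h
    · rw [eps_zero, one_mul, hω, mul_comm Complex.I]
      rw [show (1 : ℂ) + (s:ℂ) * Complex.I = ((1:ℝ):ℂ) + (s:ℝ) * Complex.I by norm_num]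
      rw [Complex.norm_add_mul_I]
      rw [show (1:ℝ)^2 + s^2 = 1 + lam by rw [hss]; ring]
    · rw [eps_one, hω]
      rw [show (1 : ℂ) + -1 * (Complex.I * (s:ℂ)) = ((1:ℝ):ℂ) + ((-s : ℝ):ℂ) * Complex.I by
        push_cast; ring]
      rw [Complex.norm_add_mul_I]
      rw [show (1:ℝ)^2 + (-s)^2 = 1 + lam by rw [← hss]; ring]
  have hprodabs : ∀ a : Fin n → ZMod 2,
      ‖∏ i, (1 + eps (a i + z i) * ω)‖ = (1 + lam) ^ (n / 2) := by
    intro a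
    rw [norm_prod]
    rw [Finset.prod_congr rfl (fun i _ => hfac (a i + z i)), Finset.prod_const]
    rw [Finset.card_univ, Fintype.card_fin]
    have h2 : Real.sqrt (1 + lam) ^ n = (1 + lam) ^ (n / 2) := by
      have hmm : n / 2 = m := by omega
      have hms : Real.sqrt (1 + lam) * Real.sqrt (1 + lam) = 1 + lam :=
        Real.mul_self_sqrt (by linarith)
      rw [hmm, hm, pow_add, ← mul_pow, hms]
    exact h2
  have habs : ‖(N : ℂ) * ((W : ℝ) : ℂ)‖ ≤ (N : ℝ) * (1 + lam) ^ (n / 2) := by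
    rw [← hT]
    calc ‖∑ a ∈ codewords E, ∏ i, (1 + eps (a i + z i) * ω)‖
        ≤ ∑ a ∈ codewords E, ‖∏ i, (1 + eps (a i + z i) * ω)‖ :=
          norm_sum_le _ _
      _ = ∑ a ∈ codewords E, (1 + lam) ^ (n / 2) :=
          Finset.sum_congr rfl fun a _ => hprodabs a
      _ = (N : ℝ) * (1 + lam) ^ (n / 2) := by rw [Finset.sum_const, nsmul_eq_mul, hN]
  have hWnn : 0 ≤ W := by
    rw [hW]
    exact Finset.sum_nonneg fun c _ => le_of_lt (pow_pos hlam _)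
  have hNW : (N : ℝ) * W ≤ (N : ℝ) * (1 + lam) ^ (n / 2) := by
    calc (N : ℝ) * W = ‖(N : ℂ) * ((W : ℝ) : ℂ)‖ := by
          rw [norm_mul, Complex.norm_natCast, Complex.norm_real, Real.norm_eq_abs, abs_of_nonneg hWnn]
      _ ≤ (N : ℝ) * (1 + lam) ^ (n / 2) := habs
  have hstep2 : W ≤ (1 + lam) ^ (n / 2) := le_of_mul_le_mul_left hNW hNpos
  linarith
end

section
/- Let A, w, n be such that 0 < w < n/2 and A is a nonnegative real with A·λ^{w/2} ≤ (1+λ)^{n/2} for all λ ∈ (0,1). Then A ≤ 2^{(n/2)·H₂(w/n)}, where H₂(x) = −x log₂ x − (1−x) log₂(1−x). -/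
theorem bound_from_lambda (A w n : ℝ) (hA : 0 ≤ A) (hw : 0 < w) (hwn : w < n / 2)
    (h : ∀ lam : ℝ, 0 < lam → lam < 1 → A * lam ^ (w / 2) ≤ (1 + lam) ^ (n / 2)) :
    A ≤ (2 : ℝ) ^
        ((n / 2) * (-(w / n) * Real.logb 2 (w / n) - (1 - w / n) * Real.logb 2 (1 - w / n))) := by
  have hn : 0 < n := by linarith
  have hnw : 0 < n - w := by linarith
  set lam := w / (n - w) with hlam
  have hl0 : 0 < lam := div_pos hw hnw
  have hl1 : lam < 1 := (div_lt_one hnw).2 (by linarith)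
  have key := h lam hl0 hl1
  have hlpow : 0 < lam ^ (w / 2) := Real.rpow_pos_of_pos hl0 _
  have hAle : A ≤ (1 + lam) ^ (n / 2) / lam ^ (w / 2) := (le_div_iff₀ hlpow).2 key
  refine hAle.trans_eq ?_
  have h1l : 0 < 1 + lam := by linarith
  have hp : (0:ℝ) < w / n := div_pos hw hn
  have hq : (0:ℝ) < 1 - w / n := by
    have : w / n < 1 := (div_lt_one hn).2 (by linarith)
    linarith
  rw [Real.rpow_def_of_pos h1l, Real.rpow_def_of_pos hl0, ← Real.exp_sub,
    Real.rpow_def_of_pos (by norm_num : (0:ℝ) < 2)]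
  congr 1
  have e1 : (1:ℝ) + lam = n / (n - w) := by
    rw [hlam]; field_simp; ring
  have hlog2 : Real.log 2 ≠ 0 := by
    positivity
  have hq' : 1 - w / n = (n - w) / n := by field_simp
  rw [e1, hq', Real.logb, Real.logb, hlam,
    Real.log_div hw.ne' hnw.ne', Real.log_div hn.ne' hnw.ne',
    Real.log_div hw.ne' hn.ne', Real.log_div hnw.ne' hn.ne']
  field_simp
  ring
end

section
/- Let C be a weakly self-dual binary linear code of even length n with weight distribution (A_0, …, A_n). Then for every integer w with 0 < w < n/2, A_w ≤ 2^{(1/2)·H₂(w/n)·n}, where H₂(x) = −x log₂ x − (1−x) log₂(1−x) is the binary entropy function. -/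
open scoped Classical

/-! ### Auxiliary lemmas -/

/-- Sum of `t ^ (Hamming weight)` over all vectors indexed by a finset coerced to a type. -/
lemma sum_pow_hamming {n : ℕ} (J : Finset (Fin n)) (t : ℝ) :
    ∑ v : {x // x ∈ J} → ZMod 2, t ^ (hammingNorm v) = (1 + t) ^ J.card := by
  classical
  have h1 : ∀ v : {x // x ∈ J} → ZMod 2,
      t ^ (hammingNorm v) = ∏ i, (if v i ≠ 0 then t else 1) := by
    intro v
    rw [hammingNorm, Finset.prod_ite, Finset.prod_const, Finset.prod_const_one, mul_one]
  simp_rw [h1]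
  rw [← Fintype.piFinset_univ, ← Finset.prod_univ_sum
    (t := fun _ : {x // x ∈ J} => (Finset.univ : Finset (ZMod 2)))
    (f := fun _ b => if b ≠ 0 then t else (1:ℝ))]
  have h2 : ∑ b : ZMod 2, (if b ≠ 0 then t else (1:ℝ)) = 1 + t := by
    rw [show (Finset.univ : Finset (ZMod 2)) = {0, 1} by decide]
    rw [Finset.sum_insert (by decide), Finset.sum_singleton]
    norm_num
  simp_rw [h2]
  rw [Finset.prod_const, Finset.card_univ, Fintype.card_coe]

/-- The Hamming weight of a restriction, as a filtered cardinality. -/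
lemma hamming_restrict {n : ℕ} (J : Finset (Fin n)) (c : Fin n → ZMod 2) :
    hammingNorm (fun i : {x // x ∈ J} => c i.1) = (J.filter fun i => c i ≠ 0).card := by
  rw [hammingNorm]
  rw [show ({i | c ↑i ≠ 0} : Finset {x // x ∈ J})
      = Finset.univ.filter (fun i : {x // x ∈ J} => c i.1 ≠ 0) from rfl]
  rw [Finset.univ_eq_attach, Finset.filter_attach (fun i => c i ≠ 0) J,
    Finset.card_map, Finset.card_attach]

/-- If codewords are determined by their restriction to `J`, then the sum of
`t ^ (weight on J)` over codewords is at most `(1+t) ^ |J|`. -/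
lemma sum_restrict_le {n : ℕ} (C : Submodule (ZMod 2) (Fin n → ZMod 2))
    (J : Finset (Fin n))
    (hinj : ∀ c ∈ C, ∀ c' ∈ C, (∀ i ∈ J, c i = c' i) → c = c')
    (t : ℝ) (ht : 0 ≤ t) :
    ∑ c ∈ codewords C, t ^ (J.filter fun i => c i ≠ 0).card ≤ (1 + t) ^ J.card := by
  classical
  have hinjF : Set.InjOn (fun (c : Fin n → ZMod 2) (i : {x // x ∈ J}) => c i.1)
      (codewords C) := by
    intro c hc c' hc' hcc
    have hc1 : c ∈ C := by simpa [codewords] using hc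
    have hc2 : c' ∈ C := by simpa [codewords] using hc'
    refine hinj c hc1 c' hc2 (fun i hi => ?_)
    exact congrFun hcc ⟨i, hi⟩
  calc ∑ c ∈ codewords C, t ^ (J.filter fun i => c i ≠ 0).card
      = ∑ c ∈ codewords C, t ^ hammingNorm (fun i : {x // x ∈ J} => c i.1) := by
        refine Finset.sum_congr rfl fun c _ => ?_
        rw [hamming_restrict]
    _ = ∑ v ∈ (codewords C).image (fun (c : Fin n → ZMod 2) (i : {x // x ∈ J}) => c i.1),
          t ^ hammingNorm v := by
        rw [Finset.sum_image (fun a ha b hb h => hinjF ha hb h)]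
    _ ≤ ∑ v : {x // x ∈ J} → ZMod 2, t ^ hammingNorm v := by
        refine Finset.sum_le_sum_of_subset_of_nonneg (Finset.subset_univ _) ?_
        intro v _ _
        exact pow_nonneg ht _
    _ = (1 + t) ^ J.card := sum_pow_hamming J t

/-- Existence of an information set `I` such that codewords are determined both by
their restriction to `I` and (using weak self-duality) to its complement. -/
lemma exists_infoSet {n : ℕ} (C : Submodule (ZMod 2) (Fin n → ZMod 2))
    (hC : C ≤ dualCode C) :
    ∃ I : Finset (Fin n),
      (∀ c ∈ C, ∀ c' ∈ C, (∀ i ∈ I, c i = c' i) → c = c') ∧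
      (∀ c ∈ C, ∀ c' ∈ C, (∀ i ∉ I, c i = c' i) → c = c') := by
  classical
  set P : Finset (Fin n) → Prop :=
    fun I => ∀ x ∈ C, (∀ i ∈ I, x i = (0 : ZMod 2)) → x = 0 with hP
  have huniv : P Finset.univ := by
    intro x _ hx
    funext i
    exact hx i (Finset.mem_univ i)
  set S : Finset (Finset (Fin n)) :=
    (Finset.univ : Finset (Finset (Fin n))).filter P with hS
  have hSne : Finset.univ ∈ S := by
    rw [hS, Finset.mem_filter]
    exact ⟨Finset.mem_univ _, huniv⟩
  obtain ⟨I, hIS, hImin⟩ := Finset.exists_min_image S Finset.card ⟨_, hSne⟩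
  have hPI : P I := (Finset.mem_filter.mp hIS).2
  have prop1 : ∀ c ∈ C, ∀ c' ∈ C, (∀ i ∈ I, c i = c' i) → c = c' := by
    intro c hc c' hc' hagree
    have hx : c - c' ∈ C := sub_mem hc hc'
    have : c - c' = 0 := by
      refine hPI _ hx (fun i hi => ?_)
      simp [hagree i hi]
    exact sub_eq_zero.mp this
  have key : ∀ i₀ ∈ I, ∃ v ∈ C, v i₀ = 1 ∧ ∀ j ∈ I, j ≠ i₀ → v j = 0 := by
    intro i₀ hi₀
    have herase : ¬ P (I.erase i₀) := by
      intro hPe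
      have hmem : I.erase i₀ ∈ S := by
        rw [hS, Finset.mem_filter]
        exact ⟨Finset.mem_univ _, hPe⟩
      have := hImin _ hmem
      have hlt : (I.erase i₀).card < I.card := Finset.card_erase_lt_of_mem hi₀
      omega
    simp only [hP] at herase
    push_neg at herase
    obtain ⟨x, hxC, hxe, hxne⟩ := herase
    have hxi₀ : x i₀ ≠ 0 := by
      intro h0
      refine hxne (hPI x hxC (fun i hi => ?_))
      rcases eq_or_ne i i₀ with rfl | hne
      · exact h0
      · exact hxe i (Finset.mem_erase.mpr ⟨hne, hi⟩)
    have hone : x i₀ = 1 := by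
      have : ∀ a : ZMod 2, a ≠ 0 → a = 1 := by decide
      exact this _ hxi₀
    exact ⟨x, hxC, hone, fun j hj hne => hxe j (Finset.mem_erase.mpr ⟨hne, hj⟩)⟩
  refine ⟨I, prop1, ?_⟩
  intro c hc c' hc' hagree
  have hxC : c - c' ∈ C := sub_mem hc hc'
  have hxout : ∀ i, i ∉ I → (c - c') i = 0 := by
    intro i hi; simp [hagree i hi]
  have : c - c' = 0 := by
    funext i
    by_cases hiI : i ∈ I
    · obtain ⟨v, hvC, hv1, hv0⟩ := key i hiI
      have horth : ∑ j, (c - c') j * v j = 0 := hC hxC v hvC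
      have hsingle : ∑ j, (c - c') j * v j = (c - c') i := by
        rw [Finset.sum_eq_single i]
        · rw [hv1, mul_one]
        · intro j _ hne
          by_cases hjI : j ∈ I
          · rw [hv0 j hjI hne, mul_zero]
          · rw [hxout j hjI, zero_mul]
        · intro h; exact absurd (Finset.mem_univ i) h
      rw [hsingle] at horth
      exact horth
    · exact hxout i hiI
  exact sub_eq_zero.mp this

/-- The core inequality: `A_w² · t^w ≤ (1+t)^n` via Cauchy–Schwarz. -/
lemma core_ineq {n : ℕ} (C : Submodule (ZMod 2) (Fin n → ZMod 2))
    (I : Finset (Fin n))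
    (h1 : ∀ c ∈ C, ∀ c' ∈ C, (∀ i ∈ I, c i = c' i) → c = c')
    (h2 : ∀ c ∈ C, ∀ c' ∈ C, (∀ i ∉ I, c i = c' i) → c = c')
    (t : ℝ) (ht : 0 ≤ t) (w : ℕ) :
    (weightDist C w : ℝ) ^ 2 * t ^ w ≤ (1 + t) ^ n := by
  classical
  set l : ℝ := Real.sqrt t with hl
  have hl0 : 0 ≤ l := Real.sqrt_nonneg t
  have hl2 : l ^ 2 = t := Real.sq_sqrt ht
  set wI : (Fin n → ZMod 2) → ℕ := fun c => (I.filter fun i => c i ≠ 0).card with hwI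
  set wO : (Fin n → ZMod 2) → ℕ := fun c => (Iᶜ.filter fun i => c i ≠ 0).card with hwO
  have hsplit : ∀ c : Fin n → ZMod 2, hammingNorm c = wI c + wO c := by
    intro c
    rw [hammingNorm, hwI, hwO]
    rw [show ({i | c i ≠ 0} : Finset (Fin n)) = Finset.univ.filter (fun i => c i ≠ 0) from rfl]
    rw [← Finset.union_compl I, Finset.filter_union,
      Finset.card_union_of_disjoint (Finset.disjoint_filter_filter disjoint_compl_right)]
  have hA : (weightDist C w : ℝ) * l ^ w ≤ ∑ c ∈ codewords C, l ^ hammingNorm c := by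
    have e1 : ∑ c ∈ (Finset.univ.filter fun c : Fin n → ZMod 2 => c ∈ C ∧ hammingNorm c = w),
        l ^ hammingNorm c = (weightDist C w : ℝ) * l ^ w := by
      rw [Finset.sum_congr rfl (fun c hc => by
        rw [(Finset.mem_filter.mp hc).2.2]), Finset.sum_const, nsmul_eq_mul, weightDist]
    rw [← e1]
    refine Finset.sum_le_sum_of_subset_of_nonneg ?_ (fun c _ _ => pow_nonneg hl0 _)
    intro c hc
    exact Finset.mem_filter.mpr ⟨Finset.mem_univ c, (Finset.mem_filter.mp hc).2.1⟩
  have hCS : (∑ c ∈ codewords C, l ^ hammingNorm c) ^ 2 ≤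
      (∑ c ∈ codewords C, t ^ wI c) * (∑ c ∈ codewords C, t ^ wO c) := by
    have hcs := Finset.sum_mul_sq_le_sq_mul_sq (codewords C)
      (fun c => l ^ wI c) (fun c => l ^ wO c)
    have e2 : ∀ c : Fin n → ZMod 2, l ^ wI c * l ^ wO c = l ^ hammingNorm c := by
      intro c; rw [← pow_add, hsplit c]
    have e3 : ∀ c : Fin n → ZMod 2, (l ^ wI c) ^ 2 = t ^ wI c := by
      intro c; rw [← pow_right_comm, hl2]
    have e4 : ∀ c : Fin n → ZMod 2, (l ^ wO c) ^ 2 = t ^ wO c := by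
      intro c; rw [← pow_right_comm, hl2]
    calc (∑ c ∈ codewords C, l ^ hammingNorm c) ^ 2
        = (∑ c ∈ codewords C, l ^ wI c * l ^ wO c) ^ 2 := by
          rw [Finset.sum_congr rfl (fun c _ => (e2 c).symm)]
      _ ≤ (∑ c ∈ codewords C, (l ^ wI c) ^ 2) * (∑ c ∈ codewords C, (l ^ wO c) ^ 2) := hcs
      _ = (∑ c ∈ codewords C, t ^ wI c) * (∑ c ∈ codewords C, t ^ wO c) := by
          rw [Finset.sum_congr rfl (fun c _ => e3 c), Finset.sum_congr rfl (fun c _ => e4 c)]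
  have hC1 : ∑ c ∈ codewords C, t ^ wI c ≤ (1 + t) ^ I.card :=
    sum_restrict_le C I h1 t ht
  have hC2 : ∑ c ∈ codewords C, t ^ wO c ≤ (1 + t) ^ (Iᶜ).card := by
    refine sum_restrict_le C Iᶜ ?_ t ht
    intro c hc c' hc' hagree
    exact h2 c hc c' hc' (fun i hi => hagree i (Finset.mem_compl.mpr hi))
  have hsum_nonneg : ∀ (f : (Fin n → ZMod 2) → ℕ), (0:ℝ) ≤ ∑ c ∈ codewords C, t ^ f c :=
    fun f => Finset.sum_nonneg (fun c _ => pow_nonneg ht _)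
  have hfin : (∑ c ∈ codewords C, l ^ hammingNorm c) ^ 2 ≤ (1 + t) ^ n := by
    refine hCS.trans ?_
    calc (∑ c ∈ codewords C, t ^ wI c) * (∑ c ∈ codewords C, t ^ wO c)
        ≤ (1 + t) ^ I.card * (1 + t) ^ (Iᶜ).card := by
          exact mul_le_mul hC1 hC2 (hsum_nonneg wO) (pow_nonneg (by linarith) _)
      _ = (1 + t) ^ n := by
          rw [← pow_add, Finset.card_add_card_compl, Fintype.card_fin]
  have hAl : (0:ℝ) ≤ (weightDist C w : ℝ) * l ^ w :=
    mul_nonneg (Nat.cast_nonneg _) (pow_nonneg hl0 _)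
  have hfin2 := (pow_le_pow_left₀ hAl hA 2).trans hfin
  calc (weightDist C w : ℝ) ^ 2 * t ^ w
      = ((weightDist C w : ℝ) * l ^ w) ^ 2 := by
        rw [mul_pow, ← pow_right_comm l, hl2]
    _ ≤ (1 + t) ^ n := hfin2

/-- The optimization step: choosing `t = p/(1-p)` in the core inequality
yields the entropy bound. -/
lemma final_step (n w A : ℕ) (hw : 0 < w) (hwn : 2 * w < n)
    (hcore : ∀ t : ℝ, 0 ≤ t → (A : ℝ) ^ 2 * t ^ w ≤ (1 + t) ^ n) :
    (A : ℝ) ≤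
      (2 : ℝ) ^ ((1 / 2 : ℝ) *
        (-(w / n : ℝ) * Real.logb 2 (w / n) - (1 - w / n) * Real.logb 2 (1 - w / n)) * n) := by
  have hn0 : 0 < n := by omega
  have hwltn : w < n := by omega
  have hnR : (0:ℝ) < n := by exact_mod_cast hn0
  have hwR : (0:ℝ) < w := by exact_mod_cast hw
  set p : ℝ := (w : ℝ) / n with hp
  have hp0 : 0 < p := div_pos hwR hnR
  have hp1 : p < 1 := (div_lt_one hnR).mpr (by exact_mod_cast hwltn)
  have h1p : 0 < 1 - p := by linarith
  set t : ℝ := p / (1 - p) with ht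
  have ht0 : 0 < t := div_pos hp0 h1p
  set E : ℝ := (1 / 2 : ℝ) *
      (-p * Real.logb 2 p - (1 - p) * Real.logb 2 (1 - p)) * n with hE
  set T : ℝ := (2:ℝ) ^ E with hT
  have hT0 : 0 < T := Real.rpow_pos_of_pos (by norm_num) E
  have hpn : p * n = w := by rw [hp]; field_simp
  have h1pn : (1 - p) * n = (n : ℝ) - w := by rw [sub_mul, one_mul, hpn]
  have hE2 : E * 2 = (-(w:ℝ)) * Real.logb 2 p + (-((n:ℝ) - w)) * Real.logb 2 (1 - p) := by
    have : E * 2 = (-(p * n)) * Real.logb 2 p + (-((1 - p) * n)) * Real.logb 2 (1 - p) := by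
      rw [hE]; ring
    rw [this, hpn, h1pn]
  have hT2 : T ^ (2:ℕ) = (p ^ w)⁻¹ * ((1 - p) ^ (n - w))⁻¹ := by
    rw [hT, ← Real.rpow_natCast ((2:ℝ) ^ E) 2, ← Real.rpow_mul (by norm_num : (0:ℝ) ≤ 2)]
    push_cast
    rw [hE2, Real.rpow_add (by norm_num : (0:ℝ) < 2)]
    rw [mul_comm (-(w:ℝ)) _, mul_comm (-((n:ℝ) - w)) _]
    rw [Real.rpow_mul (by norm_num : (0:ℝ) ≤ 2), Real.rpow_mul (by norm_num : (0:ℝ) ≤ 2)]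
    rw [Real.rpow_logb (by norm_num) (by norm_num) hp0,
      Real.rpow_logb (by norm_num) (by norm_num) h1p]
    rw [Real.rpow_neg hp0.le, Real.rpow_neg h1p.le]
    rw [Real.rpow_natCast]
    congr 1
    congr 1
    rw [show ((n:ℝ) - w) = ((n - w : ℕ) : ℝ) by push_cast [Nat.cast_sub hwltn.le]; ring]
    rw [Real.rpow_natCast]
  have hid : T ^ (2:ℕ) * t ^ w = (1 + t) ^ n := by
    have h1t : 1 + p / (1 - p) = (1 - p)⁻¹ := by
      rw [eq_comm, inv_eq_iff_eq_inv, eq_comm]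
      field_simp
      ring
    have hpow : (1 - p) ^ n = (1 - p) ^ (n - w) * (1 - p) ^ w := by
      rw [← pow_add]
      congr 1
      omega
    rw [hT2, ht, h1t, div_pow, inv_pow, hpow]
    have hpne : p ^ w ≠ 0 := pow_ne_zero _ hp0.ne'
    have h1pne : (1 - p) ^ w ≠ 0 := pow_ne_zero _ h1p.ne'
    have h1pne2 : (1 - p) ^ (n - w) ≠ 0 := pow_ne_zero _ h1p.ne'
    field_simp
    have hx : (n:ℝ) * (p / (1 - p)) * (1 - p) = w := by
      rw [mul_assoc, div_mul_cancel₀ p h1p.ne', mul_comm ((n:ℝ)) p, hpn]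
    rw [← hx, mul_pow]
    ring
  have hmain : (A : ℝ) ^ 2 * t ^ w ≤ T ^ (2:ℕ) * t ^ w := by
    rw [hid]; exact hcore t ht0.le
  have hA2 : (A : ℝ) ^ 2 ≤ T ^ 2 :=
    le_of_mul_le_mul_right hmain (pow_pos ht0 w)
  calc (A : ℝ) = Real.sqrt ((A:ℝ) ^ 2) := (Real.sqrt_sq (Nat.cast_nonneg _)).symm
    _ ≤ Real.sqrt (T ^ 2) := Real.sqrt_le_sqrt hA2
    _ = T := Real.sqrt_sq hT0.le

theorem entropy_bound (n : ℕ) (hn : Even n)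
    (C : Submodule (ZMod 2) (Fin n → ZMod 2)) (hC : C ≤ dualCode C)
    (w : ℕ) (hw : 0 < w) (hwn : 2 * w < n) :
    (weightDist C w : ℝ) ≤
      (2 : ℝ) ^ ((1 / 2 : ℝ) *
        (-(w / n : ℝ) * Real.logb 2 (w / n) - (1 - w / n) * Real.logb 2 (1 - w / n)) * n) := by
  obtain ⟨I, h1, h2⟩ := exists_infoSet C hC
  exact final_step n w (weightDist C w) hw hwn
    (fun t ht => core_ineq C I h1 h2 t ht w)
end

section
/- Let C be a weakly self-dual binary linear code of even length n with weight distribution (A_0, …, A_n). Then for every integer w with 0 < w < n/2, A_w ≤ √e · (n − w + 1)^{w/2}. -/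
open scoped Classical

namespace SqE

open Finset

variable {n : ℕ}

lemma zmod2_cases (a : ZMod 2) : a = 0 ∨ a = 1 := by revert a; decide

/-- real value of a coordinate -/
noncomputable def chi {n : ℕ} (i : Fin n) : (Fin n → ZMod 2) → ℝ := fun x => ((x i).val : ℝ)

lemma chi_eq (i : Fin n) (x : Fin n → ZMod 2) :
    chi i x = if x i ≠ 0 then (1:ℝ) else 0 := by
  rcases zmod2_cases (x i) with h | h <;>
    simp [chi, h, show (1:ZMod 2).val = 1 from rfl]

lemma chi_idem (i : Fin n) (x : Fin n → ZMod 2) : chi i x * chi i x = chi i x := by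
  rw [chi_eq]; split <;> simp

/-- size of intersection of supports -/
noncomputable def interNat {n : ℕ} (c c' : Fin n → ZMod 2) : ℕ :=
  (Finset.univ.filter (fun i => c i ≠ 0 ∧ c' i ≠ 0)).card

lemma interNat_self (c : Fin n → ZMod 2) : interNat c c = hammingNorm c := by
  simp [interNat, hammingNorm]

lemma interNat_cast (c c' : Fin n → ZMod 2) :
    ((interNat c c' : ZMod 2)) = ∑ i, c i * c' i := by
  have h : ∀ a b : ZMod 2, a * b = if a ≠ 0 ∧ b ≠ 0 then (1:ZMod 2) else 0 := by decide
  rw [Finset.sum_congr rfl (fun i _ => h (c i) (c' i)), Finset.sum_boole, interNat]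

lemma interNat_le (c c' : Fin n → ZMod 2) : interNat c c' ≤ hammingNorm c := by
  rw [← interNat_self]
  apply Finset.card_le_card
  intro i hi
  simp only [interNat, Finset.mem_filter] at *
  exact ⟨hi.1, hi.2.1, hi.2.1⟩

lemma eq_of_interNat_eq {c c' : Fin n → ZMod 2} (h : interNat c c' = hammingNorm c)
    (h' : hammingNorm c = hammingNorm c') : c = c' := by
  have hsub : (Finset.univ.filter (fun i => c i ≠ 0 ∧ c' i ≠ 0)) ⊆
      (Finset.univ.filter (fun i => c i ≠ 0)) := by
    intro i hi; simp only [Finset.mem_filter] at *; exact ⟨hi.1, hi.2.1⟩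
  have hnc : hammingNorm c = (Finset.univ.filter (fun i => c i ≠ 0)).card := by
    simp [hammingNorm]
  have heq1 : (Finset.univ.filter (fun i => c i ≠ 0 ∧ c' i ≠ 0)) =
      (Finset.univ.filter (fun i => c i ≠ 0)) := by
    apply Finset.eq_of_subset_of_card_le hsub
    rw [← hnc, ← h]; exact le_rfl
  have hsub2 : (Finset.univ.filter (fun i => c i ≠ 0)) ⊆
      (Finset.univ.filter (fun i => c' i ≠ 0)) := by
    intro i hi
    have : i ∈ (Finset.univ.filter (fun i => c i ≠ 0 ∧ c' i ≠ 0)) := heq1 ▸ hi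
    simp only [Finset.mem_filter] at *
    exact ⟨this.1, this.2.2⟩
  have hnc' : hammingNorm c' = (Finset.univ.filter (fun i => c' i ≠ 0)).card := by
    simp [hammingNorm]
  have heq2 : (Finset.univ.filter (fun i => c i ≠ 0)) =
      (Finset.univ.filter (fun i => c' i ≠ 0)) := by
    apply Finset.eq_of_subset_of_card_le hsub2
    rw [← hnc, ← hnc', h']
  funext i
  have hiff : (c i ≠ 0) ↔ (c' i ≠ 0) := by
    constructor
    · intro hci
      have : i ∈ (Finset.univ.filter (fun i => c' i ≠ 0)) := by
        rw [← heq2]; simp [hci]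
      simpa using this
    · intro hci
      have : i ∈ (Finset.univ.filter (fun i => c i ≠ 0)) := by
        rw [heq2]; simp [hci]
      simpa using this
  rcases zmod2_cases (c i) with h1 | h1 <;> rcases zmod2_cases (c' i) with h2 | h2 <;>
    simp [h1, h2] at hiff ⊢

end SqE

namespace SqE

open Finset

variable {n : ℕ}

noncomputable def mono {n : ℕ} (S : Finset (Fin n)) : (Fin n → ZMod 2) → ℝ :=
  fun x => ∏ i ∈ S, chi i x

noncomputable def gens (n t : ℕ) : Finset ((Fin n → ZMod 2) → ℝ) :=
  (Finset.univ.filter fun S : Finset (Fin n) => S.card ≤ t).image mono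

noncomputable def ip {n : ℕ} (c : Fin n → ZMod 2) : (Fin n → ZMod 2) → ℝ :=
  fun x => ∑ i ∈ Finset.univ.filter (fun i => c i ≠ 0), chi i x

lemma ip_eq_interNat (c x : Fin n → ZMod 2) : ip c x = (interNat c x : ℝ) := by
  rw [ip, Finset.sum_congr rfl (fun i _ => chi_eq i x), Finset.sum_boole,
    Finset.filter_filter, interNat]

lemma mono_mem_gens {S : Finset (Fin n)} {t : ℕ} (h : S.card ≤ t) : mono S ∈ gens n t :=
  Finset.mem_image_of_mem mono (Finset.mem_filter.mpr ⟨Finset.mem_univ _, h⟩)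

lemma mono_mul_chi (S : Finset (Fin n)) (i : Fin n) :
    (fun x => mono S x * chi i x) = mono (insert i S) := by
  funext x
  by_cases h : i ∈ S
  · rw [Finset.insert_eq_self.mpr h, mono, ← Finset.mul_prod_erase S _ h]
    rw [mul_comm (chi i x) _, mul_assoc, chi_idem]
  · show (∏ j ∈ S, chi j x) * chi i x = ∏ j ∈ insert i S, chi j x
    rw [Finset.prod_insert h, mul_comm]

lemma mul_mem_span {t : ℕ} (c : Fin n → ZMod 2) (u : ℝ) {S : Finset (Fin n)} (hS : S.card ≤ t) :
    (fun x => mono S x * (ip c x - u)) ∈ Submodule.span ℝ ((gens n (t+1) : Finset _) : Set _) := by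
  have key : (fun x => mono S x * (ip c x - u))
      = (∑ i ∈ Finset.univ.filter (fun i => c i ≠ 0), mono (insert i S)) - u • mono S := by
    funext x
    simp only [Finset.sum_apply, Pi.sub_apply, Pi.smul_apply, smul_eq_mul]
    rw [mul_sub, ip, Finset.mul_sum]
    rw [Finset.sum_congr rfl (fun i _ => congrFun (mono_mul_chi S i) x)]
    ring
  rw [key]
  refine sub_mem (Submodule.sum_mem _ fun i _ => Submodule.subset_span ?_)
    (Submodule.smul_mem _ _ (Submodule.subset_span ?_))
  · exact_mod_cast mono_mem_gens (le_trans (Finset.card_insert_le _ _) (by omega))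
  · exact_mod_cast mono_mem_gens (le_trans hS (Nat.le_succ t))

lemma prod_mem_span (c : Fin n → ZMod 2) (a : ℕ → ℝ) (t : ℕ) :
    (fun x => ∏ l ∈ Finset.range t, (ip c x - a l))
      ∈ Submodule.span ℝ ((gens n t : Finset _) : Set _) := by
  induction t with
  | zero =>
    have h1 : (fun x : Fin n → ZMod 2 => ∏ l ∈ Finset.range 0, (ip c x - a l))
        = mono (∅ : Finset (Fin n)) := by
      funext x; simp [mono]
    rw [h1]
    exact Submodule.subset_span (by exact_mod_cast mono_mem_gens (by simp))
  | succ r ih =>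
    have h1 : (fun x => ∏ l ∈ Finset.range (r+1), (ip c x - a l)) =
        (LinearMap.mulRight ℝ (fun x => ip c x - a r))
          (fun x => ∏ l ∈ Finset.range r, (ip c x - a l)) := by
      funext x; rw [Finset.prod_range_succ]; rfl
    rw [h1]
    have h2 := Submodule.mem_map_of_mem
      (f := LinearMap.mulRight ℝ (fun x => ip c x - a r)) ih
    rw [Submodule.map_span] at h2
    refine Submodule.span_le.mpr ?_ h2
    rintro g ⟨g', hg', rfl⟩
    obtain ⟨S, hS, rfl⟩ := Finset.mem_image.mp (Finset.mem_coe.mp hg')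
    have hS' : S.card ≤ r := (Finset.mem_filter.mp hS).2
    exact mul_mem_span c (a r) hS'

lemma gens_card (n t : ℕ) :
    (gens n t).card ≤ ∑ i ∈ Finset.range (t+1), n.choose i := by
  refine le_trans Finset.card_image_le ?_
  have hsub : (Finset.univ.filter fun S : Finset (Fin n) => S.card ≤ t) ⊆
      (Finset.range (t+1)).biUnion (fun i => Finset.powersetCard i Finset.univ) := by
    intro S hS
    simp only [Finset.mem_filter, Finset.mem_biUnion, Finset.mem_range,
      Finset.mem_powersetCard] at *
    exact ⟨S.card, by omega, Finset.subset_univ S, rfl⟩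
  refine le_trans (Finset.card_le_card hsub) (le_trans Finset.card_biUnion_le (le_of_eq ?_))
  refine Finset.sum_congr rfl (fun i _ => ?_)
  rw [Finset.card_powersetCard, Finset.card_univ, Fintype.card_fin]

end SqE

namespace SqE
open Nat

lemma fact_le_pow_mul : ∀ t i : ℕ, i ≤ t → t ! ≤ i ! * t ^ (t - i) := by
  intro t
  induction t with
  | zero => intro i hi; interval_cases i; simp
  | succ r ih =>
    intro i hi
    rcases Nat.eq_or_lt_of_le hi with h | h
    · subst h; simp
    · have hi' : i ≤ r := Nat.lt_succ_iff.mp h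
      calc (r+1)! = (r+1) * r ! := rfl
        _ ≤ (r+1) * (i ! * r ^ (r - i)) := Nat.mul_le_mul_left _ (ih i hi')
        _ ≤ (r+1) * (i ! * (r+1) ^ (r - i)) := by
            exact Nat.mul_le_mul_left _ (Nat.mul_le_mul_left _
              (Nat.pow_le_pow_left (Nat.le_succ r) _))
        _ = i ! * ((r+1) ^ (r - i) * (r+1)) := by ring
        _ = i ! * (r+1) ^ (r - i + 1) := by rw [pow_succ]
        _ = i ! * (r+1) ^ (r + 1 - i) := by
            have h2 : r - i + 1 = r + 1 - i := by omega
            rw [h2]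

lemma term_bound {n t i : ℕ} (hit : i ≤ t) (hn : 4 * t ≤ n) :
    n.choose i * (t ! * 4 ^ (t - i)) ≤ n ^ t := by
  calc n.choose i * (t ! * 4 ^ (t - i))
      ≤ n.choose i * ((i ! * t ^ (t - i)) * 4 ^ (t - i)) := by
        exact Nat.mul_le_mul_left _ (Nat.mul_le_mul_right _ (fact_le_pow_mul t i hit))
    _ = (i ! * n.choose i) * (4 * t) ^ (t - i) := by rw [mul_pow]; ring
    _ = n.descFactorial i * (4 * t) ^ (t - i) := by rw [Nat.descFactorial_eq_factorial_mul_choose]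
    _ ≤ n ^ i * n ^ (t - i) := Nat.mul_le_mul (Nat.descFactorial_le_pow n i)
        (Nat.pow_le_pow_left hn _)
    _ = n ^ t := by rw [← pow_add]; congr 1; omega

lemma two_pow_le_fact : ∀ s : ℕ, (4:ℝ)/3 * 2 ^ (s+4) ≤ ((s+4)! : ℝ) := by
  intro s
  induction s with
  | zero => norm_num [Nat.factorial]
  | succ r ih =>
    have h1 : ((r+1+4)! : ℝ) = (r+5) * ((r+4)! : ℝ) := by
      push_cast [show r+1+4 = (r+4)+1 by omega, Nat.factorial_succ]
      ring
    have h2 : (4:ℝ)/3 * 2 ^ (r+1+4) = 2 * ((4:ℝ)/3 * 2 ^ (r+4)) := by ring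
    rw [h1, h2]
    have hr5 : (2:ℝ) ≤ (r+5 : ℝ) := by
      have := Nat.cast_nonneg (α := ℝ) r
      linarith
    calc 2 * ((4:ℝ)/3 * 2 ^ (r+4)) ≤ 2 * ((r+4)! : ℝ) := by
          apply mul_le_mul_of_nonneg_left ih (by norm_num)
      _ ≤ (r+5) * ((r+4)! : ℝ) := by
          apply mul_le_mul_of_nonneg_right hr5 (by positivity)

lemma sqrt_e_ge : (1.6 : ℝ) ≤ Real.sqrt (Real.exp 1) := by
  apply Real.le_sqrt_of_sq_le
  nlinarith [Real.exp_one_gt_d9]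

lemma one_le_sqrt_e : (1 : ℝ) ≤ Real.sqrt (Real.exp 1) := by linarith [sqrt_e_ge]

lemma star (t : ℕ) (ht : 1 ≤ t) :
    (4:ℝ)/3 * (4*t+2) ^ t ≤ Real.sqrt (Real.exp 1) * (t ! : ℝ) * (2*t+3) ^ t := by
  obtain h3 | h4 : t ≤ 3 ∨ 4 ≤ t := by omega
  · interval_cases t
    · norm_num [Nat.factorial]
      nlinarith [sqrt_e_ge]
    · norm_num [Nat.factorial]
      nlinarith [sqrt_e_ge]
    · norm_num [Nat.factorial]
      nlinarith [one_le_sqrt_e]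
  · obtain ⟨s, rfl⟩ : ∃ s, t = s + 4 := ⟨t - 4, by omega⟩
    push_cast
    have hb : ((4:ℝ)*(s+4)+2) ^ (s+4) ≤ 2 ^ (s+4) * ((2:ℝ)*(s+4)+3) ^ (s+4) := by
      rw [← mul_pow]
      apply pow_le_pow_left₀ (by positivity)
      ring_nf
      nlinarith []
    calc (4:ℝ)/3 * (4*(s+4)+2) ^ (s+4)
        ≤ (4:ℝ)/3 * (2 ^ (s+4) * (2*(s+4)+3) ^ (s+4)) := by
          apply mul_le_mul_of_nonneg_left ?_ (by norm_num)
          exact_mod_cast hb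
      _ = ((4:ℝ)/3 * 2 ^ (s+4)) * (2*(s+4)+3) ^ (s+4) := by ring
      _ ≤ ((s+4)! : ℝ) * (2*(s+4)+3) ^ (s+4) := by
          apply mul_le_mul_of_nonneg_right (two_pow_le_fact s) (by positivity)
      _ ≤ Real.sqrt (Real.exp 1) * ((s+4)! : ℝ) * (2*((s:ℝ)+4)+3) ^ (s+4) := by
          have hX : (0:ℝ) ≤ ((s+4)! : ℝ) * (2*((s:ℝ)+4)+3) ^ (s+4) := by positivity
          nlinarith [mul_nonneg (sub_nonneg.mpr one_le_sqrt_e) hX]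

lemma count_le (n t : ℕ) (ht : 1 ≤ t) (hn : 4 * t + 2 ≤ n) :
    ((∑ i ∈ Finset.range (t+1), n.choose i : ℕ) : ℝ) ≤
      Real.sqrt (Real.exp 1) * ((n:ℝ) - 2*t + 1) ^ t := by
  have hnR : (4*(t:ℝ)+2) ≤ (n:ℝ) := by exact_mod_cast hn
  have htR : (1:ℝ) ≤ (t:ℝ) := by exact_mod_cast ht
  set m : ℝ := (n:ℝ) - 2*t + 1 with hm
  have hm0 : (0:ℝ) < m := by rw [hm]; linarith
  have hfac : (0:ℝ) < (t ! : ℝ) := by exact_mod_cast Nat.factorial_pos t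
  -- step 1: termwise bound
  have step1 : ∀ i ∈ Finset.range (t+1),
      (n.choose i : ℝ) ≤ (n:ℝ) ^ t / (t ! : ℝ) * (1/4) ^ (t - i) := by
    intro i hi
    have hit : i ≤ t := by simpa using Nat.lt_succ_iff.mp (Finset.mem_range.mp hi)
    have h1 : (n.choose i : ℝ) * ((t ! : ℝ) * 4 ^ (t - i)) ≤ (n:ℝ) ^ t := by
      exact_mod_cast term_bound hit (by omega)
    have h4 : (0:ℝ) < (t ! : ℝ) * 4 ^ (t - i) := by positivity
    rw [show (n:ℝ) ^ t / (t ! : ℝ) * (1/4) ^ (t - i)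
        = (n:ℝ) ^ t / ((t ! : ℝ) * 4 ^ (t - i)) by
      rw [← div_div, one_div, inv_pow, div_eq_mul_inv ((n:ℝ)^t / _)]]
    rw [le_div_iff₀ h4]
    exact h1
  have step2 : ((∑ i ∈ Finset.range (t+1), n.choose i : ℕ) : ℝ)
      ≤ (n:ℝ) ^ t / (t ! : ℝ) * ∑ i ∈ Finset.range (t+1), (1/4:ℝ) ^ (t - i) := by
    push_cast
    rw [Finset.mul_sum]
    exact Finset.sum_le_sum step1
  have step3 : ∑ i ∈ Finset.range (t+1), (1/4:ℝ) ^ (t - i) ≤ 4/3 := by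
    have hrefl := Finset.sum_range_reflect (fun j => (1/4:ℝ) ^ j) (t+1)
    simp only [Nat.add_sub_cancel] at hrefl
    rw [hrefl]
    have hgeom := geom_sum_eq (by norm_num : (1/4:ℝ) ≠ 1) (t+1)
    rw [hgeom]
    have hp : (0:ℝ) ≤ (1/4:ℝ) ^ (t+1) := by positivity
    rw [div_le_iff_of_neg (by norm_num : (1/4:ℝ) - 1 < 0)]
    nlinarith
  -- combine to key bound
  have hkey : (4:ℝ)/3 * (n:ℝ) ^ t ≤ Real.sqrt (Real.exp 1) * (t ! : ℝ) * m ^ t := by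
    have hmul : (n:ℝ) * (2*t+3) ≤ (4*t+2) * m := by nlinarith
    have hpow : ((n:ℝ) * (2*t+3)) ^ t ≤ ((4*(t:ℝ)+2) * m) ^ t :=
      pow_le_pow_left₀ (by positivity) hmul t
    have h2t3 : (0:ℝ) < ((2:ℝ)*t+3) ^ t := by positivity
    have hstar := star t ht
    rw [mul_pow, mul_pow] at hpow
    have : (4:ℝ)/3 * ((n:ℝ) ^ t * (2*(t:ℝ)+3) ^ t)
        ≤ (Real.sqrt (Real.exp 1) * (t ! : ℝ) * m ^ t) * (2*(t:ℝ)+3) ^ t := by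
      calc (4:ℝ)/3 * ((n:ℝ) ^ t * (2*(t:ℝ)+3) ^ t)
          ≤ (4:ℝ)/3 * ((4*(t:ℝ)+2) ^ t * m ^ t) := by
            apply mul_le_mul_of_nonneg_left ?_ (by norm_num)
            exact hpow
        _ = ((4:ℝ)/3 * (4*(t:ℝ)+2) ^ t) * m ^ t := by ring
        _ ≤ (Real.sqrt (Real.exp 1) * (t ! : ℝ) * (2*(t:ℝ)+3) ^ t) * m ^ t := by
            apply mul_le_mul_of_nonneg_right ?_ (by positivity)
            exact_mod_cast hstar
        _ = (Real.sqrt (Real.exp 1) * (t ! : ℝ) * m ^ t) * (2*(t:ℝ)+3) ^ t := by ring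
    have := (mul_le_mul_iff_of_pos_right h2t3).mp (by linarith [this] : ((4:ℝ)/3 * (n:ℝ) ^ t) * (2*(t:ℝ)+3) ^ t ≤ (Real.sqrt (Real.exp 1) * (t ! : ℝ) * m ^ t) * (2*(t:ℝ)+3) ^ t)
    exact this
  calc ((∑ i ∈ Finset.range (t+1), n.choose i : ℕ) : ℝ)
      ≤ (n:ℝ) ^ t / (t ! : ℝ) * ∑ i ∈ Finset.range (t+1), (1/4:ℝ) ^ (t - i) := step2
    _ ≤ (n:ℝ) ^ t / (t ! : ℝ) * (4/3) := by
        apply mul_le_mul_of_nonneg_left step3 (by positivity)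
    _ ≤ Real.sqrt (Real.exp 1) * m ^ t := by
        rw [div_mul_eq_mul_div, div_le_iff₀ hfac]
        calc (n:ℝ) ^ t * (4/3) = (4:ℝ)/3 * (n:ℝ) ^ t := by ring
          _ ≤ Real.sqrt (Real.exp 1) * (t ! : ℝ) * m ^ t := hkey
          _ = Real.sqrt (Real.exp 1) * m ^ t * (t ! : ℝ) := by ring

end SqE

theorem sqrt_e_bound (n : ℕ) (hn : Even n)
    (C : Submodule (ZMod 2) (Fin n → ZMod 2)) (hC : C ≤ dualCode C)
    (w : ℕ) (hw : 0 < w) (hwn : 2 * w < n) :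
    (weightDist C w : ℝ) ≤
      Real.sqrt (Real.exp 1) * ((n : ℝ) - w + 1) ^ ((w : ℝ) / 2) := by
  classical
  have hwln : w ≤ n := by omega
  have hbase : (0:ℝ) ≤ (n:ℝ) - w + 1 := by
    have h1 : (w:ℝ) ≤ (n:ℝ) := by exact_mod_cast hwln
    linarith
  -- pairwise even intersections
  have hpar : ∀ c ∈ C, ∀ c' ∈ C, 2 ∣ SqE.interNat c c' := by
    intro c hc c' hc'
    have h0 : ((SqE.interNat c c' : ZMod 2)) = 0 := by
      rw [SqE.interNat_cast]
      exact hC hc c' hc'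
    exact (ZMod.natCast_eq_zero_iff _ 2).mp h0
  by_cases hwe : Even w
  · -- main case
    obtain ⟨t, htw⟩ := hwe
    have ht1 : 1 ≤ t := by omega
    have hn4 : 4 * t + 2 ≤ n := by
      obtain ⟨r, hr⟩ := hn
      omega
    -- the finset of weight-w codewords
    set F := Finset.univ.filter (fun c : Fin n → ZMod 2 => c ∈ C ∧ hammingNorm c = w) with hF
    have hmemF : ∀ c ∈ F, c ∈ C ∧ hammingNorm c = w := by
      intro c hc
      exact (Finset.mem_filter.mp hc).2
    -- the polynomial functions
    set f : (Fin n → ZMod 2) → (Fin n → ZMod 2) → ℝ :=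
      fun c x => ∏ l ∈ Finset.range t, (SqE.ip c x - 2 * (l:ℝ)) with hf
    have hoff : ∀ c ∈ F, ∀ c' ∈ F, c ≠ c' → f c c' = 0 := by
      intro c hc c' hc' hne
      obtain ⟨hcC, hcw⟩ := hmemF c hc
      obtain ⟨hc'C, hc'w⟩ := hmemF c' hc'
      obtain ⟨k, hk⟩ := hpar c hcC c' hc'C
      have hle : SqE.interNat c c' ≤ hammingNorm c := SqE.interNat_le c c'
      have hne2 : SqE.interNat c c' ≠ hammingNorm c := by
        intro h
        exact hne (SqE.eq_of_interNat_eq h (hcw.trans hc'w.symm))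
      have hkt : k < t := by omega
      apply Finset.prod_eq_zero (Finset.mem_range.mpr hkt)
      rw [SqE.ip_eq_interNat, hk]
      push_cast
      ring
    have hdiag : ∀ c ∈ F, f c c ≠ 0 := by
      intro c hc
      obtain ⟨hcC, hcw⟩ := hmemF c hc
      have hipc : SqE.ip c c = ((t:ℝ) + t) := by
        rw [SqE.ip_eq_interNat, SqE.interNat_self, hcw, htw]
        push_cast
        ring
      apply ne_of_gt
      apply Finset.prod_pos
      intro l hl
      have hlt : l < t := Finset.mem_range.mp hl
      have : (l:ℝ) < (t:ℝ) := by exact_mod_cast hlt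
      rw [hipc]
      linarith
    -- linear independence
    have hli : LinearIndependent ℝ (fun A : {x // x ∈ F} => f A.1) := by
      rw [Fintype.linearIndependent_iff]
      intro g hg A
      have hA := congrFun hg A.1
      rw [Finset.sum_apply] at hA
      simp only [Pi.smul_apply, smul_eq_mul, Pi.zero_apply] at hA
      have hsingle : ∑ i : {x // x ∈ F}, g i * f i.1 A.1 = g A * f A.1 A.1 := by
        apply Finset.sum_eq_single A
        · intro b _ hb
          rw [hoff b.1 b.2 A.1 A.2 (fun h => hb (Subtype.ext h)), mul_zero]
        · intro h
          exact absurd (Finset.mem_univ A) h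
      rw [hsingle] at hA
      rcases mul_eq_zero.mp hA with h | h
      · exact h
      · exact absurd h (hdiag A.1 A.2)
    -- all the functions lie in the span of the monomials
    have hspan : ∀ c : Fin n → ZMod 2,
        f c ∈ Submodule.span ℝ ((SqE.gens n t : Finset _) : Set _) := by
      intro c
      exact SqE.prod_mem_span c (fun l => 2 * (l:ℝ)) t
    set W := Submodule.span ℝ ((SqE.gens n t : Finset _) : Set ((Fin n → ZMod 2) → ℝ)) with hW
    have hliW : LinearIndependent ℝ (fun A : {x // x ∈ F} => (⟨f A.1, hspan A.1⟩ : W)) := by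
      apply LinearIndependent.of_comp W.subtype
      exact hli
    have hcard1 : Fintype.card {x // x ∈ F} ≤ Module.finrank ℝ W :=
      hliW.fintype_card_le_finrank
    have hcard2 : Module.finrank ℝ W ≤ (SqE.gens n t).card :=
      finrank_span_finset_le_card _
    have hcount : F.card ≤ ∑ i ∈ Finset.range (t+1), n.choose i := by
      calc F.card = Fintype.card {x // x ∈ F} := (Fintype.card_coe F).symm
        _ ≤ Module.finrank ℝ W := hcard1
        _ ≤ (SqE.gens n t).card := hcard2
        _ ≤ ∑ i ∈ Finset.range (t+1), n.choose i := SqE.gens_card n t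
    -- arithmetic
    have harith := SqE.count_le n t ht1 hn4
    have hwd : weightDist C w = F.card := rfl
    have hexp : ((w:ℝ)/2) = ((t : ℕ) : ℝ) := by
      rw [htw]; push_cast; ring
    have hbb : ((n:ℝ) - w + 1) = ((n:ℝ) - 2*t + 1) := by
      rw [htw]; push_cast; ring
    rw [hwd, hexp, hbb, Real.rpow_natCast]
    calc (F.card : ℝ) ≤ ((∑ i ∈ Finset.range (t+1), n.choose i : ℕ) : ℝ) := by
          exact_mod_cast hcount
      _ ≤ Real.sqrt (Real.exp 1) * ((n:ℝ) - 2*t + 1) ^ t := harith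
  · -- odd weight: no codewords
    have hzero : weightDist C w = 0 := by
      rw [weightDist, Finset.card_eq_zero, Finset.filter_eq_empty_iff]
      intro c _
      intro hcontra
      obtain ⟨hcC, hcw⟩ := hcontra
      have h2 : 2 ∣ SqE.interNat c c := hpar c hcC c hcC
      rw [SqE.interNat_self, hcw] at h2
      exact hwe ((even_iff_two_dvd).mpr h2)
    rw [hzero]
    push_cast
    apply mul_nonneg (Real.sqrt_nonneg _)
    exact Real.rpow_nonneg hbase _
end

section
/- Let C be a weakly self-dual binary linear code of even length n. Then for every u with 1 < u < 2, Σ_{j=0}^{n/2} A_{2j} · u^{n/2 − j} · (2−u)^j ≤ 2^{n/2}, where (A_0, …, A_n) is the weight distribution of C. -/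
open scoped Classical
set_option maxHeartbeats 1000000

namespace Ineq15

open Finset

variable {n : ℕ}

lemma zmod2 (a : ZMod 2) : a = 0 ∨ a = 1 := by revert a; decide

lemma zmod2_addself (a : ZMod 2) : a + a = 0 := by revert a; decide

lemma fun_addself (x : Fin n → ZMod 2) : x + x = 0 := by
  funext i; exact zmod2_addself (x i)

lemma add_cancel_left (x y : Fin n → ZMod 2) : x + (x + y) = y := by
  rw [← add_assoc, fun_addself, zero_add]

/-- Support of a vector as a finset. -/
def suppF (c : Fin n → ZMod 2) : Finset (Fin n) := Finset.univ.filter (fun i => c i ≠ 0)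

lemma mem_suppF {c : Fin n → ZMod 2} {i : Fin n} : i ∈ suppF c ↔ c i ≠ 0 := by
  simp [suppF]

lemma card_suppF (c : Fin n → ZMod 2) : (suppF c).card = hammingNorm c := by
  unfold hammingNorm suppF
  congr 1

lemma mem_codewords {C : Submodule (ZMod 2) (Fin n → ZMod 2)} {c : Fin n → ZMod 2} :
    c ∈ codewords C ↔ c ∈ C := by simp [codewords]

/-- Vectors supported inside `S`. -/
def suppIn (S : Finset (Fin n)) : Submodule (ZMod 2) (Fin n → ZMod 2) where
  carrier := {c | ∀ i ∉ S, c i = 0}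
  add_mem' := by intro a b ha hb i hi; simp [ha i hi, hb i hi]
  zero_mem' := by intro i _; rfl
  smul_mem' := by intro r a ha i hi; simp [ha i hi]

lemma mem_suppIn {S : Finset (Fin n)} {c : Fin n → ZMod 2} :
    c ∈ suppIn S ↔ ∀ i ∉ S, c i = 0 := Iff.rfl

lemma mem_dualCode {C : Submodule (ZMod 2) (Fin n → ZMod 2)} {a : Fin n → ZMod 2} :
    a ∈ dualCode C ↔ ∀ c ∈ C, ∑ i, a i * c i = 0 := Iff.rfl

lemma dualCode_anti {C₁ C₂ : Submodule (ZMod 2) (Fin n → ZMod 2)} (h : C₁ ≤ C₂) :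
    dualCode C₂ ≤ dualCode C₁ := fun _ ha c hc => ha c (h hc)

lemma suppF_subset {S : Finset (Fin n)} {c : Fin n → ZMod 2} (h : c ∈ suppIn S) :
    suppF c ⊆ S := by
  intro i hi
  rw [mem_suppF] at hi
  by_contra hns
  exact hi (h i hns)

lemma wt_le_card {S : Finset (Fin n)} {c : Fin n → ZMod 2} (h : c ∈ suppIn S) :
    hammingNorm c ≤ S.card := by
  rw [← card_suppF]; exact Finset.card_le_card (suppF_subset h)

lemma suppF_add_eq {c d : Fin n → ZMod 2} (h : ∀ i, c i ≠ 0 → d i ≠ 0) :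
    suppF (d + c) = suppF d \ suppF c := by
  have key : ∀ a b : ZMod 2, (¬a = 0 → ¬b = 0) → ((b + a ≠ 0) ↔ (b ≠ 0 ∧ ¬a ≠ 0)) := by
    decide
  ext i
  simp only [mem_suppF, Finset.mem_sdiff, Pi.add_apply]
  exact key (c i) (d i) (h i)

lemma wt_add_sub {c d : Fin n → ZMod 2} (h : ∀ i, c i ≠ 0 → d i ≠ 0) :
    hammingNorm (d + c) = hammingNorm d - hammingNorm c := by
  rw [← card_suppF, ← card_suppF, ← card_suppF, suppF_add_eq h]
  exact Finset.card_sdiff_of_subset (fun i hi => mem_suppF.mpr (h i (mem_suppF.mp hi)))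

lemma wt_le_of_supp_le {c d : Fin n → ZMod 2} (h : ∀ i, c i ≠ 0 → d i ≠ 0) :
    hammingNorm c ≤ hammingNorm d := by
  rw [← card_suppF, ← card_suppF]
  exact Finset.card_le_card (fun i hi => mem_suppF.mpr (h i (mem_suppF.mp hi)))


/-! ### characters -/

noncomputable def sgn (a : ZMod 2) : ℝ := if a = 0 then 1 else -1

lemma sgn_zero : sgn 0 = 1 := by simp [sgn]

lemma sgn_add (a b : ZMod 2) : sgn (a + b) = sgn a * sgn b := by
  rcases zmod2 a with ha | ha <;> rcases zmod2 b with hb | hb <;>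
    rw [ha, hb] <;> norm_num [sgn] <;> decide

lemma sgn_sum {ι : Type*} (S : Finset ι) (v : ι → ZMod 2) :
    sgn (∑ i ∈ S, v i) = ∏ i ∈ S, sgn (v i) := by
  induction S using Finset.cons_induction with
  | empty => simp [sgn_zero]
  | cons a s ha ih => rw [Finset.sum_cons, Finset.prod_cons, sgn_add, ih]

lemma sum_eq_wt (c : Fin n → ZMod 2) : ∑ i, c i = (hammingNorm c : ZMod 2) := by
  rw [← Finset.sum_filter_ne_zero Finset.univ]
  have : ∀ i ∈ Finset.univ.filter (fun i => c i ≠ 0), c i = 1 := by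
    intro i hi
    rcases zmod2 (c i) with h | h
    · simp [h] at hi
    · exact h
  rw [Finset.sum_congr rfl this, Finset.sum_const, nsmul_eq_mul, mul_one, ← card_suppF]
  congr 1

lemma wt_even {C : Submodule (ZMod 2) (Fin n → ZMod 2)} (hC : C ≤ dualCode C)
    {c : Fin n → ZMod 2} (hc : c ∈ C) : 2 ∣ hammingNorm c := by
  have h0 : ∑ i, c i * c i = 0 := (hC hc) c hc
  have hms : ∀ a : ZMod 2, a * a = a := by decide
  rw [Finset.sum_congr rfl (fun i _ => hms (c i)), sum_eq_wt] at h0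
  exact (ZMod.natCast_eq_zero_iff _ 2).mp h0

lemma char_sum (C : Submodule (ZMod 2) (Fin n → ZMod 2)) (x : Fin n → ZMod 2) :
    ∑ c' ∈ codewords C, sgn (∑ i, c' i * x i) =
      if x ∈ dualCode C then ((codewords C).card : ℝ) else 0 := by
  by_cases hx : x ∈ dualCode C
  · rw [if_pos hx]
    have : ∀ c' ∈ codewords C, sgn (∑ i, c' i * x i) = 1 := by
      intro c' hc'
      have h1 : ∑ i, x i * c' i = 0 := hx c' (mem_codewords.mp hc')
      have h2 : ∑ i, c' i * x i = 0 := by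
        rw [Finset.sum_congr rfl (fun i _ => mul_comm (c' i) (x i))]; exact h1
      rw [h2, sgn_zero]
    rw [Finset.sum_congr rfl this, Finset.sum_const, nsmul_eq_mul, mul_one]
  · rw [if_neg hx]
    rw [mem_dualCode] at hx
    push_neg at hx
    obtain ⟨c0, hc0, hc0x⟩ := hx
    have hval : ∑ i, c0 i * x i = 1 := by
      have h2 : ∑ i, c0 i * x i ≠ 0 := by
        intro h
        apply hc0x
        rw [← h]
        exact Finset.sum_congr rfl (fun i _ => mul_comm (x i) (c0 i))
      rcases zmod2 (∑ i, c0 i * x i) with h | h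
      · exact absurd h h2
      · exact h
    have hrw : ∑ c' ∈ codewords C, sgn (∑ i, c' i * x i)
        = ∑ c' ∈ codewords C, sgn (∑ i, (c' + c0) i * x i) := by
      apply Finset.sum_nbij' (fun c => c + c0) (fun c => c + c0)
      · intro a ha; rw [mem_codewords] at *; exact C.add_mem ha hc0
      · intro a ha; rw [mem_codewords] at *; exact C.add_mem ha hc0
      · intro a _; funext i; simp [add_assoc, zmod2_addself (c0 i)]
      · intro a _; funext i; simp [add_assoc, zmod2_addself (c0 i)]
      · intro a _
        have hrw2 : a + c0 + c0 = a := by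
          funext i; simp [add_assoc, zmod2_addself (c0 i)]
        rw [hrw2]
    have hneg : ∀ c' ∈ codewords C, sgn (∑ i, (c' + c0) i * x i)
        = - sgn (∑ i, c' i * x i) := by
      intro c' _
      have : ∑ i, (c' + c0) i * x i = (∑ i, c' i * x i) + ∑ i, c0 i * x i := by
        rw [← Finset.sum_add_distrib]
        exact Finset.sum_congr rfl (fun i _ => by simp [add_mul])
      rw [this, hval, sgn_add]
      have : sgn 1 = -1 := by norm_num [sgn]
      rw [this]; ring
    rw [Finset.sum_congr rfl hneg, Finset.sum_neg_distrib] at hrw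
    linarith


/-! ### sum over supported vectors as product -/

lemma sum_zmod2 (h : ZMod 2 → ℝ) : ∑ a, h a = h 0 + h 1 := by
  have : (Finset.univ : Finset (ZMod 2)) = {0, 1} := by decide
  rw [this, Finset.sum_insert (by decide), Finset.sum_singleton]

lemma sum_supported_prod (S : Finset (Fin n)) (g : Fin n → ZMod 2 → ℝ) :
    ∑ x ∈ codewords (suppIn S), ∏ i ∈ S, g i (x i) = ∏ i ∈ S, (g i 0 + g i 1) := by
  set g' : Fin n → ZMod 2 → ℝ :=
    fun i a => if i ∈ S then g i a else if a = 0 then 1 else 0 with hg'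
  have h1 : ∀ x ∈ codewords (suppIn S), ∏ i ∈ S, g i (x i) = ∏ i, g' i (x i) := by
    intro x hx
    rw [mem_codewords, mem_suppIn] at hx
    have := Finset.prod_subset (Finset.subset_univ S)
      (f := fun i => g' i (x i)) ?_
    · rw [← this]
      exact Finset.prod_congr rfl (fun i hi => by simp [hg', hi])
    · intro i _ hi
      simp [hg', hi, hx i hi]
  rw [Finset.sum_congr rfl h1]
  have h2 : ∑ x ∈ codewords (suppIn S), ∏ i, g' i (x i)
      = ∑ x : Fin n → ZMod 2, ∏ i, g' i (x i) := by
    apply Finset.sum_subset (Finset.subset_univ _)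
    intro x _ hx
    rw [mem_codewords, mem_suppIn] at hx
    push_neg at hx
    obtain ⟨i, hiS, hxi⟩ := hx
    exact Finset.prod_eq_zero (Finset.mem_univ i) (by simp [hg', hiS, hxi])
  rw [h2, ← Fintype.prod_sum]
  have h3 : ∀ i : Fin n, ∑ a : ZMod 2, g' i a = g' i 0 + g' i 1 :=
    fun i => sum_zmod2 (g' i)
  rw [Finset.prod_congr rfl (fun i _ => h3 i)]
  symm
  rw [← Finset.prod_subset (Finset.subset_univ S)
    (f := fun i => g' i 0 + g' i 1) (fun i _ hi => by simp [hg', hi])]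
  exact Finset.prod_congr rfl (fun i hi => by simp [hg', hi])

lemma prod_ite_weight {S : Finset (Fin n)} {x : Fin n → ZMod 2} (hx : x ∈ suppIn S)
    (σ τ : ℝ) :
    ∏ i ∈ S, (if x i = 0 then τ else σ)
      = σ ^ hammingNorm x * τ ^ (S.card - hammingNorm x) := by
  classical
  rw [Finset.prod_ite (fun _ => τ) (fun _ => σ), Finset.prod_const, Finset.prod_const]
  have hne : S.filter (fun i => ¬ x i = 0) = suppF x := by
    ext i
    simp only [Finset.mem_filter, mem_suppF]
    exact ⟨fun h => h.2, fun h => ⟨suppF_subset hx (mem_suppF.mpr h), h⟩⟩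
  have hcard1 : (S.filter (fun i => ¬ x i = 0)).card = hammingNorm x := by
    rw [hne, card_suppF]
  have hcard0 : (S.filter (fun i => x i = 0)).card = S.card - hammingNorm x := by
    have := Finset.card_filter_add_card_filter_not
      (s := S) (p := fun i => x i = 0)
    omega
  rw [hcard1, hcard0, mul_comm]


/-! ### the MacWilliams-type coordinatewise factorization -/

noncomputable def rfun (σ τ : ℝ) (a b : ZMod 2) : ℝ :=
  if a = 0 then (if b = 0 then τ * τ + σ * σ else τ * τ - σ * σ)
  else (if b = 0 then 2 * (σ * τ) else 0)

lemma star_eq {S : Finset (Fin n)} {c c' : Fin n → ZMod 2}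
    (hc : c ∈ suppIn S) (hc' : c' ∈ suppIn S) (σ τ : ℝ) :
    ∑ x ∈ codewords (suppIn S), sgn (∑ i, c' i * x i) *
        ((σ ^ hammingNorm x * τ ^ (S.card - hammingNorm x)) *
         (σ ^ hammingNorm (x + c) * τ ^ (S.card - hammingNorm (x + c))))
      = ∏ i ∈ S, rfun σ τ (c i) (c' i) := by
  set g : Fin n → ZMod 2 → ℝ :=
    fun i a => sgn (c' i * a) *
      ((if a = 0 then τ else σ) * (if a + c i = 0 then τ else σ)) with hg
  have h1 : ∀ x ∈ codewords (suppIn S),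
      sgn (∑ i, c' i * x i) *
        ((σ ^ hammingNorm x * τ ^ (S.card - hammingNorm x)) *
         (σ ^ hammingNorm (x + c) * τ ^ (S.card - hammingNorm (x + c))))
      = ∏ i ∈ S, g i (x i) := by
    intro x hx
    rw [mem_codewords] at hx
    have hxc : x + c ∈ suppIn S := (suppIn S).add_mem hx hc
    have e1 : sgn (∑ i, c' i * x i) = ∏ i ∈ S, sgn (c' i * x i) := by
      rw [← sgn_sum]
      congr 1
      symm
      apply Finset.sum_subset (Finset.subset_univ S)
      intro i _ hi
      rw [mem_suppIn] at hx
      rw [hx i hi, mul_zero]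
    have e2 := prod_ite_weight hx σ τ
    have e3 := prod_ite_weight hxc σ τ
    rw [e1, ← e2, ← e3, ← Finset.prod_mul_distrib, ← Finset.prod_mul_distrib]
    exact Finset.prod_congr rfl (fun i _ => by simp [hg])
  rw [Finset.sum_congr rfl h1, sum_supported_prod]
  apply Finset.prod_congr rfl
  intro i _
  have hc'2 : ∀ b : ZMod 2, sgn (b * 1) = sgn b := by
    intro b; rw [mul_one]
  rcases zmod2 (c i) with h | h <;> rcases zmod2 (c' i) with h' | h' <;>
    rw [hg] <;> simp only [h, h'] <;>
    simp [rfun, sgn, show (1 : ZMod 2) + 1 = 0 by decide,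
      show (0 : ZMod 2) + 1 = 1 by decide, show (1 : ZMod 2) ≠ 0 by decide] <;>
    ring

lemma rprod_le {S : Finset (Fin n)} {c c' : Fin n → ZMod 2}
    (hc : c ∈ suppIn S) (hc' : c' ∈ suppIn S) {σ τ : ℝ}
    (hσ : 0 ≤ σ) (hτ : 0 ≤ τ) (hστ : σ ^ 2 + τ ^ 2 = 1) :
    ∏ i ∈ S, rfun σ τ (c i) (c' i)
      ≤ if (∀ i, c i = 0 ∨ c' i = 0) then
          (2 * (σ * τ)) ^ hammingNorm c * |τ * τ - σ * σ| ^ hammingNorm c' else 0 := by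
  by_cases hdisj : ∀ i, c i = 0 ∨ c' i = 0
  · rw [if_pos hdisj]
    have hsplit := Finset.prod_filter_mul_prod_filter_not S (fun i => ¬ c i = 0)
      (fun i => rfun σ τ (c i) (c' i))
    rw [← hsplit]
    have hf1 : S.filter (fun i => ¬ c i = 0) = suppF c := by
      ext i
      simp only [Finset.mem_filter, mem_suppF]
      exact ⟨fun h => h.2, fun h => ⟨suppF_subset hc (mem_suppF.mpr h), h⟩⟩
    have e1 : ∏ i ∈ S.filter (fun i => ¬ c i = 0), rfun σ τ (c i) (c' i)
        = (2 * (σ * τ)) ^ hammingNorm c := by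
      rw [← card_suppF, ← hf1, ← Finset.prod_const]
      apply Finset.prod_congr rfl
      intro i hi
      simp only [Finset.mem_filter] at hi
      have hci : c i = 1 := (zmod2 (c i)).resolve_left hi.2
      have hc'i : c' i = 0 := (hdisj i).resolve_left hi.2
      simp [rfun, hci, hc'i, show (1 : ZMod 2) ≠ 0 by decide]
    have hsplit2 := Finset.prod_filter_mul_prod_filter_not
      (S.filter (fun i => c i = 0)) (fun i => ¬ c' i = 0)
      (fun i => rfun σ τ (c i) (c' i))
    have hff : (S.filter (fun i => ¬ ¬ c i = 0)) = S.filter (fun i => c i = 0) := by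
      apply Finset.filter_congr
      intro i _
      simp
    have hf2 : (S.filter (fun i => c i = 0)).filter (fun i => ¬ c' i = 0) = suppF c' := by
      ext i
      simp only [Finset.mem_filter, mem_suppF]
      constructor
      · exact fun h => h.2
      · intro h
        refine ⟨⟨suppF_subset hc' (mem_suppF.mpr h), ?_⟩, h⟩
        exact (hdisj i).resolve_right h
    have e2 : ∏ i ∈ (S.filter (fun i => c i = 0)).filter (fun i => ¬ c' i = 0),
        rfun σ τ (c i) (c' i) = (τ * τ - σ * σ) ^ hammingNorm c' := by
      rw [← card_suppF, ← hf2, ← Finset.prod_const]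
      apply Finset.prod_congr rfl
      intro i hi
      simp only [Finset.mem_filter] at hi
      simp [rfun, hi.1.2, hi.2]
    have e3 : ∏ i ∈ (S.filter (fun i => c i = 0)).filter (fun i => ¬ ¬ c' i = 0),
        rfun σ τ (c i) (c' i) = 1 := by
      apply Finset.prod_eq_one
      intro i hi
      simp only [Finset.mem_filter, not_not] at hi
      simp only [rfun, hi.1.2, hi.2, if_pos]
      nlinarith [hστ]
    rw [hff, ← hsplit2]
    rw [e1, e2, e3, mul_one]
    apply mul_le_mul_of_nonneg_left _ (by positivity)
    calc (τ * τ - σ * σ) ^ hammingNorm c' ≤ |(τ * τ - σ * σ) ^ hammingNorm c'| :=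
          le_abs_self _
      _ = |τ * τ - σ * σ| ^ hammingNorm c' := abs_pow _ _
  · rw [if_neg hdisj]
    push_neg at hdisj
    obtain ⟨i, hci, hc'i⟩ := hdisj
    have hiS : i ∈ S := suppF_subset hc (mem_suppF.mpr hci)
    have : rfun σ τ (c i) (c' i) = 0 := by
      simp [rfun, hci, hc'i]
    rw [Finset.prod_eq_zero hiS this]


lemma disj_iff {c c' : Fin n → ZMod 2} :
    (∀ i, c i = 0 ∨ c' i = 0) ↔ (∀ i, c i ≠ 0 → (c + c') i ≠ 0) := by
  have key : ∀ a b : ZMod 2, (a = 0 ∨ b = 0) ↔ (a ≠ 0 → a + b ≠ 0) := by decide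
  constructor
  · intro h i hi
    exact ((key (c i) (c' i)).mp (h i)) hi
  · intro h i
    exact (key (c i) (c' i)).mpr (h i)

lemma wt_of_disj {c c' : Fin n → ZMod 2} (h : ∀ i, c i = 0 ∨ c' i = 0) :
    hammingNorm c' = hammingNorm (c + c') - hammingNorm c := by
  have habc : ∀ a b : ZMod 2, a + b + a = b := by decide
  have hcc : (c + c') + c = c' := by funext i; exact habc (c i) (c' i)
  have h2 := wt_add_sub (disj_iff.mp h)
  rw [hcc] at h2
  exact h2

/-! ### the key lemma -/

lemma key : ∀ (m : ℕ) (S : Finset (Fin n)), S.card ≤ m →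
    ∀ (C : Submodule (ZMod 2) (Fin n → ZMod 2)), C ≤ dualCode C → C ≤ suppIn S →
    ∀ σ τ : ℝ, 0 ≤ σ → 0 ≤ τ → σ ^ 2 + τ ^ 2 = 1 →
    (∑ c ∈ codewords C, σ ^ hammingNorm c * τ ^ (S.card - hammingNorm c)) ≤ 1 := by
  intro m
  induction m using Nat.strong_induction_on with
  | _ m IH =>
  intro S hSm C hC hCS
  set K := codewords C with hK
  set G : ℝ → ℝ → ℝ :=
    fun σ τ => ∑ c ∈ K, σ ^ hammingNorm c * τ ^ (S.card - hammingNorm c) with hG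
  show ∀ σ τ : ℝ, 0 ≤ σ → 0 ≤ τ → σ ^ 2 + τ ^ 2 = 1 → G σ τ ≤ 1
  have h0K : (0 : Fin n → ZMod 2) ∈ K := mem_codewords.mpr C.zero_mem
  have hKpos : 0 < ((K.card : ℕ) : ℝ) := by
    have : 0 < K.card := Finset.card_pos.mpr ⟨0, h0K⟩
    exact_mod_cast this
  have hK1 : (1 : ℝ) ≤ (K.card : ℝ) := by
    have : 0 < K.card := Finset.card_pos.mpr ⟨0, h0K⟩
    exact_mod_cast this
  have hKsupp : ∀ c ∈ K, c ∈ suppIn S := fun c hc => hCS (mem_codewords.mp hc)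
  have hGnonneg : ∀ σ τ : ℝ, 0 ≤ σ → 0 ≤ τ → 0 ≤ G σ τ := by
    intro σ τ hσ hτ
    exact Finset.sum_nonneg (fun c _ => by positivity)
  have hGle : ∀ σ τ : ℝ, 0 ≤ σ → 0 ≤ τ → σ ^ 2 + τ ^ 2 = 1 → G σ τ ≤ K.card := by
    intro σ τ hσ hτ hστ
    have hσ1 : σ ≤ 1 := by nlinarith
    have hτ1 : τ ≤ 1 := by nlinarith
    have := Finset.sum_le_card_nsmul K
      (fun c => σ ^ hammingNorm c * τ ^ (S.card - hammingNorm c)) 1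
      (fun c _ => mul_le_one₀ (pow_le_one₀ hσ hσ1) (by positivity) (pow_le_one₀ hτ hτ1))
    rw [nsmul_eq_mul, mul_one] at this
    exact this
  -- the central estimate
  have Est : ∀ σ τ : ℝ, 0 ≤ σ → 0 ≤ τ → σ ^ 2 + τ ^ 2 = 1 →
      ((K.card : ℕ) : ℝ) * (G σ τ) ^ 2 ≤
        ∑ d ∈ K, ∑ cc ∈ K.filter (fun cc => ∀ i, cc i ≠ 0 → d i ≠ 0),
          (2 * (σ * τ)) ^ hammingNorm cc
            * |τ * τ - σ * σ| ^ (hammingNorm d - hammingNorm cc) := by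
    intro σ τ hσ hτ hστ
    have hw : ∀ x : Fin n → ZMod 2,
        0 ≤ σ ^ hammingNorm x * τ ^ (S.card - hammingNorm x) := fun x => by positivity
    set w : (Fin n → ZMod 2) → ℝ :=
      fun x => σ ^ hammingNorm x * τ ^ (S.card - hammingNorm x) with hwdef
    set XS := codewords (suppIn S) with hXS
    set KD := codewords (dualCode C ⊓ suppIn S) with hKD
    have step1a : (G σ τ) ^ 2 = ∑ x ∈ K, ∑ c ∈ K, w x * w (x + c) := by
      rw [sq, hG]
      rw [Finset.sum_mul_sum]
      apply Finset.sum_congr rfl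
      intro x hx
      have hxC : x ∈ C := mem_codewords.mp hx
      apply Finset.sum_nbij' (fun c2 => x + c2) (fun c => x + c)
      · intro a ha
        exact mem_codewords.mpr (C.add_mem hxC (mem_codewords.mp ha))
      · intro a ha
        exact mem_codewords.mpr (C.add_mem hxC (mem_codewords.mp ha))
      · intro a _; exact add_cancel_left x a
      · intro a _; exact add_cancel_left x a
      · intro a _
        rw [add_cancel_left x a]
    have step1 : (G σ τ) ^ 2 = ∑ c ∈ K, ∑ x ∈ K, w x * w (x + c) := by
      rw [step1a]
      exact Finset.sum_comm
    have hKsubKD : K ⊆ KD := by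
      intro y hy
      rw [hK, mem_codewords] at hy
      rw [hKD, mem_codewords]
      exact le_inf hC hCS hy
    have step2 : ∀ c ∈ K, ∑ x ∈ K, w x * w (x + c) ≤ ∑ x ∈ KD, w x * w (x + c) := by
      intro c _
      apply Finset.sum_le_sum_of_subset_of_nonneg hKsubKD
      intro x _ _
      exact mul_nonneg (hw x) (hw (x + c))
    have hKDfil : KD = XS.filter (fun x => x ∈ dualCode C) := by
      ext x
      rw [hKD, mem_codewords, Finset.mem_filter, hXS, mem_codewords, Submodule.mem_inf]
      exact and_comm
    have step5 : ∀ c ∈ K, ((K.card : ℕ) : ℝ) * ∑ x ∈ KD, w x * w (x + c)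
        = ∑ c' ∈ K, ∑ x ∈ XS, sgn (∑ i, c' i * x i) * (w x * w (x + c)) := by
      intro c _
      rw [hKDfil, Finset.sum_filter, Finset.mul_sum]
      rw [Finset.sum_comm]
      have : ∀ x ∈ XS, ((K.card : ℕ) : ℝ) *
          (if x ∈ dualCode C then w x * w (x + c) else 0)
          = ∑ c' ∈ K, sgn (∑ i, c' i * x i) * (w x * w (x + c)) := by
        intro x _
        rw [← Finset.sum_mul, hK, char_sum C x]
        split_ifs with h
        · ring
        · ring
      exact Finset.sum_congr rfl this
    have step6 : ∀ c ∈ K, ∀ c' ∈ K,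
        ∑ x ∈ XS, sgn (∑ i, c' i * x i) * (w x * w (x + c))
          = ∏ i ∈ S, rfun σ τ (c i) (c' i) := by
      intro c hc c' hc'
      exact star_eq (hKsupp c hc) (hKsupp c' hc') σ τ
    have step7 : ∀ c ∈ K, ∀ c' ∈ K,
        (∏ i ∈ S, rfun σ τ (c i) (c' i)) ≤
          (if (∀ i, c i = 0 ∨ c' i = 0) then
            (2 * (σ * τ)) ^ hammingNorm c * |τ * τ - σ * σ| ^ hammingNorm c' else 0) := by
      intro c hc c' hc'
      exact rprod_le (hKsupp c hc) (hKsupp c' hc') hσ hτ hστ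
    have step8 : ∑ c ∈ K, ∑ c' ∈ K,
        (if (∀ i, c i = 0 ∨ c' i = 0) then
          (2 * (σ * τ)) ^ hammingNorm c * |τ * τ - σ * σ| ^ hammingNorm c' else 0)
        = ∑ d ∈ K, ∑ cc ∈ K.filter (fun cc => ∀ i, cc i ≠ 0 → d i ≠ 0),
            (2 * (σ * τ)) ^ hammingNorm cc
              * |τ * τ - σ * σ| ^ (hammingNorm d - hammingNorm cc) := by
      have hrhs : ∀ d ∈ K, ∑ cc ∈ K.filter (fun cc => ∀ i, cc i ≠ 0 → d i ≠ 0),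
          (2 * (σ * τ)) ^ hammingNorm cc
            * |τ * τ - σ * σ| ^ (hammingNorm d - hammingNorm cc)
          = ∑ cc ∈ K, (if (∀ i, cc i ≠ 0 → d i ≠ 0) then
              (2 * (σ * τ)) ^ hammingNorm cc
                * |τ * τ - σ * σ| ^ (hammingNorm d - hammingNorm cc) else 0) := by
        intro d _
        rw [Finset.sum_filter]
      rw [Finset.sum_congr rfl hrhs]
      rw [← Finset.sum_product', ← Finset.sum_product']
      apply Finset.sum_nbij' (fun p => (p.1 + p.2, p.1)) (fun q => (q.2, q.2 + q.1))
      · rintro ⟨c, c'⟩ hp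
        rw [Finset.mem_product] at hp ⊢
        exact ⟨mem_codewords.mpr
          (C.add_mem (mem_codewords.mp hp.1) (mem_codewords.mp hp.2)), hp.1⟩
      · rintro ⟨d, cc⟩ hq
        rw [Finset.mem_product] at hq ⊢
        exact ⟨hq.2, mem_codewords.mpr
          (C.add_mem (mem_codewords.mp hq.2) (mem_codewords.mp hq.1))⟩
      · rintro ⟨c, c'⟩ _
        show (c, c + (c + c')) = (c, c')
        rw [add_cancel_left]
      · rintro ⟨d, cc⟩ _
        show (cc + (cc + d), cc) = (d, cc)
        rw [add_cancel_left]
      · rintro ⟨c, c'⟩ _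
        simp only []
        by_cases hd : ∀ i, c i = 0 ∨ c' i = 0
        · rw [if_pos hd, if_pos (disj_iff.mp hd), wt_of_disj hd]
        · rw [if_neg hd, if_neg (fun h => hd (disj_iff.mpr h))]
    calc ((K.card : ℕ) : ℝ) * (G σ τ) ^ 2
        = ∑ c ∈ K, ((K.card : ℕ) : ℝ) * ∑ x ∈ K, w x * w (x + c) := by
          rw [step1, Finset.mul_sum]
      _ ≤ ∑ c ∈ K, ((K.card : ℕ) : ℝ) * ∑ x ∈ KD, w x * w (x + c) := by
          apply Finset.sum_le_sum
          intro c hc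
          exact mul_le_mul_of_nonneg_left (step2 c hc) (le_of_lt hKpos)
      _ = ∑ c ∈ K, ∑ c' ∈ K, ∑ x ∈ XS, sgn (∑ i, c' i * x i) * (w x * w (x + c)) := by
          exact Finset.sum_congr rfl step5
      _ = ∑ c ∈ K, ∑ c' ∈ K, ∏ i ∈ S, rfun σ τ (c i) (c' i) := by
          apply Finset.sum_congr rfl
          intro c hc
          exact Finset.sum_congr rfl (step6 c hc)
      _ ≤ ∑ c ∈ K, ∑ c' ∈ K,
            (if (∀ i, c i = 0 ∨ c' i = 0) then
              (2 * (σ * τ)) ^ hammingNorm c * |τ * τ - σ * σ| ^ hammingNorm c' else 0) := by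
          apply Finset.sum_le_sum
          intro c hc
          apply Finset.sum_le_sum
          intro c' hc'
          exact step7 c hc c' hc'
      _ = _ := step8
  -- bound for the sub-sums using induction hypothesis
  have Ibound : ∀ σ τ : ℝ, 0 ≤ σ → 0 ≤ τ → σ ^ 2 + τ ^ 2 = 1 →
      ∀ d ∈ K, hammingNorm d < S.card →
      ∑ cc ∈ K.filter (fun cc => ∀ i, cc i ≠ 0 → d i ≠ 0),
          (2 * (σ * τ)) ^ hammingNorm cc
            * |τ * τ - σ * σ| ^ (hammingNorm d - hammingNorm cc) ≤ 1 := by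
    intro σ τ hσ hτ hστ d hdK hdlt
    have hCd : codewords (C ⊓ suppIn (suppF d)) =
        K.filter (fun cc => ∀ i, cc i ≠ 0 → d i ≠ 0) := by
      ext x
      rw [mem_codewords, Finset.mem_filter, hK, mem_codewords, Submodule.mem_inf]
      constructor
      · rintro ⟨hx1, hx2⟩
        have hx2' := mem_suppIn.mp hx2
        exact ⟨hx1, fun i hxi hdi =>
          hxi (hx2' i (fun hmem => (mem_suppF.mp hmem) hdi))⟩
      · rintro ⟨hx1, hx2⟩
        refine ⟨hx1, mem_suppIn.mpr (fun i hi => ?_)⟩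
        by_contra hxi
        exact hi (mem_suppF.mpr (hx2 i hxi))
    have happ := IH (hammingNorm d) (lt_of_lt_of_le hdlt hSm) (suppF d)
      (le_of_eq (card_suppF d)) (C ⊓ suppIn (suppF d))
      (le_trans (le_trans inf_le_left hC) (dualCode_anti inf_le_left))
      inf_le_right (2 * (σ * τ)) (|τ * τ - σ * σ|) (by positivity) (abs_nonneg _)
      (by rw [sq_abs]; nlinarith)
    rw [hCd, card_suppF] at happ
    exact happ
  have Ifull : ∀ σ τ : ℝ, ∀ d ∈ K, hammingNorm d = S.card →
      ∑ cc ∈ K.filter (fun cc => ∀ i, cc i ≠ 0 → d i ≠ 0),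
          (2 * (σ * τ)) ^ hammingNorm cc
            * |τ * τ - σ * σ| ^ (hammingNorm d - hammingNorm cc)
        = G (2 * (σ * τ)) (|τ * τ - σ * σ|) := by
    intro σ τ d hdK hdw
    have hsupp_eq : suppF d = S := by
      apply Finset.eq_of_subset_of_card_le (suppF_subset (hKsupp d hdK))
      rw [card_suppF, hdw]
    have hfilter : K.filter (fun cc => ∀ i, cc i ≠ 0 → d i ≠ 0) = K := by
      apply Finset.filter_true_of_mem
      intro cc hcc i hcci
      have hiS : i ∈ S := suppF_subset (hKsupp cc hcc) (mem_suppF.mpr hcci)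
      rw [← hsupp_eq] at hiS
      exact mem_suppF.mp hiS
    rw [hfilter, hG, hdw]
  by_cases hex : ∃ d ∈ K, hammingNorm d = S.card
  · obtain ⟨d₀, hd₀K, hd₀w⟩ := hex
    have hsupp_eq : ∀ d ∈ K, hammingNorm d = S.card → suppF d = S := by
      intro d hdK hdw
      apply Finset.eq_of_subset_of_card_le (suppF_subset (hKsupp d hdK))
      rw [card_suppF, hdw]
    have huniq : ∀ d ∈ K, hammingNorm d = S.card → d = d₀ := by
      intro d hdK hdw
      funext i
      by_cases hi : i ∈ S
      · have h1 : d i ≠ 0 := mem_suppF.mp (by rw [hsupp_eq d hdK hdw]; exact hi)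
        have h2 : d₀ i ≠ 0 := mem_suppF.mp (by rw [hsupp_eq d₀ hd₀K hd₀w]; exact hi)
        rw [(zmod2 (d i)).resolve_left h1, (zmod2 (d₀ i)).resolve_left h2]
      · rw [mem_suppIn.mp (hKsupp d hdK) i hi, mem_suppIn.mp (hKsupp d₀ hd₀K) i hi]
    have claim : ∀ k : ℕ, ∀ σ τ : ℝ, 0 ≤ σ → 0 ≤ τ → σ ^ 2 + τ ^ 2 = 1 →
        G σ τ ≤ 1 + (1/2) ^ k * K.card := by
      intro k
      induction k with
      | zero =>
        intro σ τ hσ hτ hστ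
        have := hGle σ τ hσ hτ hστ
        simpa using by linarith
      | succ k ihk =>
        intro σ τ hσ hτ hστ
        have hα : (0:ℝ) ≤ 2 * (σ * τ) := by positivity
        have hβ : (0:ℝ) ≤ |τ * τ - σ * σ| := abs_nonneg _
        have hnorm : (2 * (σ * τ)) ^ 2 + |τ * τ - σ * σ| ^ 2 = 1 := by
          rw [sq_abs]; nlinarith
        have hsum : ∑ d ∈ K, ∑ cc ∈ K.filter (fun cc => ∀ i, cc i ≠ 0 → d i ≠ 0),
            (2 * (σ * τ)) ^ hammingNorm cc
              * |τ * τ - σ * σ| ^ (hammingNorm d - hammingNorm cc)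
            ≤ ((K.card : ℝ) - 1) + G (2 * (σ * τ)) (|τ * τ - σ * σ|) := by
          rw [← Finset.add_sum_erase _ _ hd₀K, Ifull σ τ d₀ hd₀K hd₀w]
          have herase : ∑ d ∈ K.erase d₀, ∑ cc ∈ K.filter (fun cc => ∀ i, cc i ≠ 0 → d i ≠ 0),
              (2 * (σ * τ)) ^ hammingNorm cc
                * |τ * τ - σ * σ| ^ (hammingNorm d - hammingNorm cc)
              ≤ (K.card : ℝ) - 1 := by
            have hstep := Finset.sum_le_card_nsmul (K.erase d₀)
              (fun d => ∑ cc ∈ K.filter (fun cc => ∀ i, cc i ≠ 0 → d i ≠ 0),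
                (2 * (σ * τ)) ^ hammingNorm cc
                  * |τ * τ - σ * σ| ^ (hammingNorm d - hammingNorm cc)) 1 ?_
            · rw [nsmul_eq_mul, mul_one, Finset.card_erase_of_mem hd₀K] at hstep
              calc _ ≤ ((K.card - 1 : ℕ) : ℝ) := hstep
                _ = (K.card : ℝ) - 1 := by
                    have : 1 ≤ K.card := Finset.card_pos.mpr ⟨0, h0K⟩
                    push_cast [Nat.cast_sub this]
                    ring
            · intro d hd
              have hdK : d ∈ K := Finset.mem_of_mem_erase hd
              have hdlt : hammingNorm d < S.card := by
                rcases lt_or_eq_of_le (wt_le_card (hKsupp d hdK)) with h | h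
                · exact h
                · exact absurd (huniq d hdK h) (Finset.ne_of_mem_erase hd)
              exact Ibound σ τ hσ hτ hστ d hdK hdlt
          linarith
        have hest := Est σ τ hσ hτ hστ
        have hrec := ihk (2 * (σ * τ)) (|τ * τ - σ * σ|) hα hβ hnorm
        have hsq : (G σ τ) ^ 2 ≤ 1 + (1/2) ^ k := by
          have h1 : ((K.card : ℕ) : ℝ) * (G σ τ) ^ 2 ≤
              ((K.card : ℝ) - 1) + (1 + (1/2) ^ k * K.card) := by
            calc ((K.card : ℕ) : ℝ) * (G σ τ) ^ 2 ≤ _ := hest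
              _ ≤ ((K.card : ℝ) - 1) + G (2 * (σ * τ)) (|τ * τ - σ * σ|) := hsum
              _ ≤ ((K.card : ℝ) - 1) + (1 + (1/2) ^ k * K.card) := by linarith
          have hp : (0:ℝ) < (1/2) ^ k := by positivity
          nlinarith [hKpos]
        have hGpos := hGnonneg σ τ hσ hτ
        have hq : (0:ℝ) < (1/2) ^ (k+1) := by positivity
        have h2 : G σ τ ≤ 1 + (1/2) ^ (k+1) := by
          by_contra hcon
          push_neg at hcon
          have hpow : ((1:ℝ)/2) ^ (k+1) = (1/2) ^ k * (1/2) := pow_succ _ _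
          nlinarith
        have : (1:ℝ) * (1/2)^(k+1) ≤ (K.card : ℝ) * (1/2)^(k+1) :=
          mul_le_mul_of_nonneg_right hK1 (le_of_lt hq)
        linarith [this]
    intro σ τ hσ hτ hστ
    by_contra hcon
    push_neg at hcon
    have hpos : (0:ℝ) < (G σ τ - 1) / K.card := by
      apply div_pos (by linarith) hKpos
    obtain ⟨k, hk⟩ := exists_pow_lt_of_lt_one hpos (by norm_num : (1:ℝ)/2 < 1)
    have := claim k σ τ hσ hτ hστ
    rw [lt_div_iff₀ hKpos] at hk
    linarith
  · intro σ τ hσ hτ hστ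
    push_neg at hex
    have hall : ∀ d ∈ K, ∑ cc ∈ K.filter (fun cc => ∀ i, cc i ≠ 0 → d i ≠ 0),
        (2 * (σ * τ)) ^ hammingNorm cc
          * |τ * τ - σ * σ| ^ (hammingNorm d - hammingNorm cc) ≤ 1 := by
      intro d hdK
      have hdlt : hammingNorm d < S.card :=
        lt_of_le_of_ne (wt_le_card (hKsupp d hdK)) (hex d hdK)
      exact Ibound σ τ hσ hτ hστ d hdK hdlt
    have hest := Est σ τ hσ hτ hστ
    have hsum := Finset.sum_le_card_nsmul K
      (fun d => ∑ cc ∈ K.filter (fun cc => ∀ i, cc i ≠ 0 → d i ≠ 0),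
        (2 * (σ * τ)) ^ hammingNorm cc
          * |τ * τ - σ * σ| ^ (hammingNorm d - hammingNorm cc)) 1 hall
    rw [nsmul_eq_mul, mul_one] at hsum
    have hsq : (G σ τ) ^ 2 ≤ 1 := by
      have : ((K.card : ℕ) : ℝ) * (G σ τ) ^ 2 ≤ ((K.card : ℕ) : ℝ) * 1 := by
        rw [mul_one]; exact le_trans hest hsum
      exact le_of_mul_le_mul_left (by linarith [this]) hKpos
    nlinarith [hGnonneg σ τ hσ hτ]

end Ineq15

theorem ineq_15 (n : ℕ) (hn : Even n)
    (C : Submodule (ZMod 2) (Fin n → ZMod 2)) (hC : C ≤ dualCode C)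
    (u : ℝ) (hu1 : 1 < u) (hu2 : u < 2) :
    ∑ j ∈ Finset.range (n / 2 + 1),
        (weightDist C (2 * j) : ℝ) * u ^ (n / 2 - j) * (2 - u) ^ j
      ≤ 2 ^ ((n : ℝ) / 2) := by
  classical
  obtain ⟨t, ht⟩ := hn
  set σ := Real.sqrt ((2 - u) / 2) with hσdef
  set τ := Real.sqrt (u / 2) with hτdef
  have hσsq : σ ^ 2 = (2 - u) / 2 := Real.sq_sqrt (by linarith)
  have hτsq : τ ^ 2 = u / 2 := Real.sq_sqrt (by linarith)
  have hcard : (Finset.univ : Finset (Fin n)).card = n := by simp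
  have hmain := Ineq15.key (n := n) n Finset.univ (le_of_eq hcard) C hC
    (fun c _ => Ineq15.mem_suppIn.mpr (fun i hi => absurd (Finset.mem_univ i) hi))
    σ τ (Real.sqrt_nonneg _) (Real.sqrt_nonneg _) (by rw [hσsq, hτsq]; ring)
  rw [hcard] at hmain
  have hwt_le : ∀ c ∈ codewords C, hammingNorm c ≤ n := by
    intro c _
    calc hammingNorm c = (Ineq15.suppF c).card := (Ineq15.card_suppF c).symm
      _ ≤ n := by simpa using Finset.card_le_card (Finset.subset_univ (Ineq15.suppF c))
  have hmaps : ∀ c ∈ codewords C, hammingNorm c / 2 ∈ Finset.range (n / 2 + 1) := by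
    intro c hc
    rw [Finset.mem_range]
    have := hwt_le c hc
    omega
  have hfib := Finset.sum_fiberwise_of_maps_to hmaps
    (fun c => u ^ (n / 2 - hammingNorm c / 2) * (2 - u) ^ (hammingNorm c / 2))
  have hLHS : ∑ j ∈ Finset.range (n / 2 + 1),
      (weightDist C (2 * j) : ℝ) * u ^ (n / 2 - j) * (2 - u) ^ j
      = ∑ c ∈ codewords C,
          u ^ (n / 2 - hammingNorm c / 2) * (2 - u) ^ (hammingNorm c / 2) := by
    rw [← hfib]
    apply Finset.sum_congr rfl
    intro j _
    have hfilter : (codewords C).filter (fun c => hammingNorm c / 2 = j)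
        = Finset.univ.filter (fun c => c ∈ C ∧ hammingNorm c = 2 * j) := by
      unfold codewords
      rw [Finset.filter_filter]
      apply Finset.filter_congr
      intro c _
      constructor
      · rintro ⟨h1, h2⟩
        have hev := Ineq15.wt_even hC h1
        exact ⟨h1, by omega⟩
      · rintro ⟨h1, h2⟩
        exact ⟨h1, by omega⟩
    have hconst : ∀ c ∈ (codewords C).filter (fun c => hammingNorm c / 2 = j),
        u ^ (n / 2 - hammingNorm c / 2) * (2 - u) ^ (hammingNorm c / 2)
          = u ^ (n / 2 - j) * (2 - u) ^ j := by
      intro c hcm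
      rw [Finset.mem_filter] at hcm
      rw [hcm.2]
    rw [Finset.sum_congr rfl hconst, Finset.sum_const, hfilter]
    simp only [weightDist]
    rw [nsmul_eq_mul]
    ring
  rw [hLHS]
  have hpt : ∀ c ∈ codewords C,
      u ^ (n / 2 - hammingNorm c / 2) * (2 - u) ^ (hammingNorm c / 2)
        = 2 ^ (n / 2) * (σ ^ hammingNorm c * τ ^ (n - hammingNorm c)) := by
    intro c hc
    obtain ⟨j, hj⟩ := Ineq15.wt_even hC (Ineq15.mem_codewords.mp hc)
    have hle := hwt_le c hc
    have h1 : σ ^ hammingNorm c = ((2 - u) / 2) ^ j := by rw [hj, pow_mul, hσsq]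
    have h2 : τ ^ (n - hammingNorm c) = (u / 2) ^ (n / 2 - j) := by
      rw [hj, show n - 2 * j = 2 * (n / 2 - j) by omega, pow_mul, hτsq]
    rw [h1, h2, hj, show 2 * j / 2 = j by omega, div_pow, div_pow,
      show (2:ℝ) ^ (n / 2) = 2 ^ (n / 2 - j) * 2 ^ j by rw [← pow_add]; congr 1; omega]
    have e1 : (2:ℝ) ^ (n / 2 - j) ≠ 0 := by positivity
    have e2 : (2:ℝ) ^ j ≠ 0 := by positivity
    field_simp
  rw [Finset.sum_congr rfl hpt, ← Finset.mul_sum]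
  have hrpow : (2:ℝ) ^ ((n : ℝ) / 2) = 2 ^ (n / 2) := by
    have hnat : ((n / 2 : ℕ) : ℝ) = (n : ℝ) / 2 := by
      rw [show n / 2 = t by omega, ht]
      push_cast
      ring
    rw [← hnat]
    exact Real.rpow_natCast 2 (n / 2)
  rw [hrpow]
  have h2pos : (0:ℝ) ≤ 2 ^ (n / 2) := by positivity
  calc (2:ℝ) ^ (n / 2) * ∑ c ∈ codewords C, σ ^ hammingNorm c * τ ^ (n - hammingNorm c)
      ≤ 2 ^ (n / 2) * 1 := mul_le_mul_of_nonneg_left hmain h2pos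
    _ = 2 ^ (n / 2) := mul_one _
end
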